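/- arXiv:2306.13365 — 8 statements merged into one kernel-verified Lean document; each statement's English description precedes it below -/
import Mathlib

section
/- Let p be an odd prime, G cyclic of order p with generator tau, and i >= 2. Let F_i be the cyclic group Z/p^i Z with tau acting as multiplication by a unit w = 1 + p^{i-1} z with z not divisible by p. Then the Tate cohomology group H^0_hat(G, F_i) and the cohomology group H^1(G, F_i) both vanish. -/
/-!
STATEMENT 3: `p` odd prime, `G = ⟨τ⟩` cyclic of order `p`, `i ≥ 2`.
Let `F_i` be `ZMod (p^i)` with `τ` acting by multiplication with
`w = 1 + p^{i-1} z`, `p ∤ z`.  Then `Ĥ⁰(G, F_i) = M^G / N(M) = 0` and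
`H¹(G, F_i) = ker N / (τ - 1)M = 0`, where `N = 1 + w + ⋯ + w^{p-1}`.
The two vanishings are expressed as the inclusions
`M^G ⊆ N(M)` and `ker N ⊆ (w - 1) M` (the reverse inclusions are automatic).
-/

/-- In `ZMod (p^i)`, if `p^j * x = 0` then `x` is a multiple of `p^(i-j)`. -/
lemma aux_pow_dvd (p i j : ℕ) [Fact p.Prime] (hj : j ≤ i) (x : ZMod (p ^ i))
    (h : (p : ZMod (p ^ i)) ^ j * x = 0) :
    ∃ y : ZMod (p ^ i), x = (p : ZMod (p ^ i)) ^ (i - j) * y := by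
  have hppos : 0 < p := (Fact.out (p := p.Prime)).pos
  haveI : NeZero (p ^ i) := ⟨pow_ne_zero _ hppos.ne'⟩
  have h1 : ((p ^ j * x.val : ℕ) : ZMod (p ^ i)) = 0 := by
    push_cast
    rw [ZMod.natCast_zmod_val]
    exact h
  rw [ZMod.natCast_eq_zero_iff] at h1
  have h2 : p ^ (i - j) ∣ x.val := by
    have h3 : p ^ j * p ^ (i - j) ∣ p ^ j * x.val := by
      rwa [← pow_add, Nat.add_sub_cancel' hj]
    exact (mul_dvd_mul_iff_left (pow_ne_zero j hppos.ne')).mp h3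
  obtain ⟨m, hm⟩ := h2
  refine ⟨(m : ZMod (p ^ i)), ?_⟩
  conv_lhs => rw [← ZMod.natCast_zmod_val x]
  rw [hm]
  push_cast
  ring

theorem stmt_3 (p i : ℕ) [Fact p.Prime] (hp : Odd p) (hi : 2 ≤ i)
    (z : ℤ) (hz : ¬ (p : ℤ) ∣ z)
    (w : ZMod (p ^ i)) (hw : w = 1 + (p : ZMod (p ^ i)) ^ (i - 1) * (z : ZMod (p ^ i)))
    (N : ZMod (p ^ i)) (hN : N = ∑ k ∈ Finset.range p, w ^ k) :
    (∀ x : ZMod (p ^ i), w * x = x → ∃ y : ZMod (p ^ i), x = N * y) ∧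
    (∀ x : ZMod (p ^ i), N * x = 0 → ∃ y : ZMod (p ^ i), x = w * y - y) := by
  have hppr : p.Prime := Fact.out
  have hi1 : 1 ≤ i := le_trans one_le_two hi
  set ε : ZMod (p ^ i) := (p : ZMod (p ^ i)) ^ (i - 1) * (z : ZMod (p ^ i)) with hε
  -- `p^i = 0`
  have hp0 : (p : ZMod (p ^ i)) ^ i = 0 := by
    rw [← Nat.cast_pow, ZMod.natCast_self]
  -- `p * ε = 0`
  have hpε : (p : ZMod (p ^ i)) * ε = 0 := by
    rw [hε, ← mul_assoc, ← pow_succ', Nat.sub_add_cancel hi1, hp0, zero_mul]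
  -- `ε^2 = 0`
  have hε2 : ε * ε = 0 := by
    have hpp : (p : ZMod (p ^ i)) ^ (i - 1) * (p : ZMod (p ^ i)) ^ (i - 1) = 0 := by
      rw [← pow_add]
      obtain ⟨k, hk⟩ := Nat.exists_eq_add_of_le (show i ≤ i - 1 + (i - 1) by omega)
      rw [hk, pow_add, hp0, zero_mul]
    calc ε * ε = (p : ZMod (p ^ i)) ^ (i - 1) * (p : ZMod (p ^ i)) ^ (i - 1)
        * ((z : ZMod (p ^ i)) * (z : ZMod (p ^ i))) := by rw [hε]; ring
      _ = 0 := by rw [hpp, zero_mul]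
  -- `z` is a unit in `ZMod (p^i)`
  have hzu : IsUnit (z : ZMod (p ^ i)) := by
    have hc : IsCoprime z ((p : ℤ) ^ i) :=
      (((Nat.prime_iff_prime_int.mp hppr).coprime_iff_not_dvd.mpr hz).symm).pow_right (n := i)
    have hc2 := hc.map (Int.castRingHom (ZMod (p ^ i)))
    simp only [map_pow, eq_intCast, Int.cast_natCast] at hc2
    rw [hp0] at hc2
    exact isCoprime_zero_right.mp hc2
  -- `w^k = 1 + k • ε`
  have hwk : ∀ k : ℕ, w ^ k = 1 + (k : ZMod (p ^ i)) * ε := by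
    intro k
    induction k with
    | zero => simp
    | succ n ih =>
      rw [pow_succ, ih, hw]
      push_cast
      linear_combination ((n : ZMod (p ^ i))) * hε2
  -- `N = p`
  have hNp : N = (p : ZMod (p ^ i)) := by
    obtain ⟨m, hm⟩ : ∃ m, p - 1 = 2 * m := by
      obtain ⟨r, hr⟩ := Nat.Odd.sub_odd hp odd_one
      exact ⟨r, by omega⟩
    have hsum : (∑ k ∈ Finset.range p, k) = p * m := by
      rw [Finset.sum_range_id, hm, show p * (2 * m) = p * m * 2 by ring,
        Nat.mul_div_cancel _ two_pos]
    calc N = ∑ k ∈ Finset.range p, (1 + (k : ZMod (p ^ i)) * ε) := by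
            rw [hN]; exact Finset.sum_congr rfl fun k _ => hwk k
      _ = (p : ZMod (p ^ i)) + (∑ k ∈ Finset.range p, (k : ZMod (p ^ i))) * ε := by
            rw [Finset.sum_add_distrib, Finset.sum_const, Finset.card_range,
              nsmul_eq_mul, mul_one, Finset.sum_mul]
      _ = (p : ZMod (p ^ i)) + (m : ZMod (p ^ i)) * ((p : ZMod (p ^ i)) * ε) := by
            rw [← Nat.cast_sum, hsum]; push_cast; ring
      _ = (p : ZMod (p ^ i)) := by rw [hpε, mul_zero, add_zero]
  obtain ⟨u, hu⟩ := hzu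
  constructor
  · -- fixed points are multiples of `N = p`
    intro x hx
    have hεx : ε * x = 0 := by
      have : w * x - x = ε * x := by rw [hw]; ring
      rw [hx, sub_self] at this
      exact this.symm
    have hpx : (p : ZMod (p ^ i)) ^ (i - 1) * x = 0 := by
      have h1 : (z : ZMod (p ^ i)) * ((p : ZMod (p ^ i)) ^ (i - 1) * x) = 0 := by
        rw [← hεx, hε]; ring
      rw [← hu] at h1
      exact u.isUnit.mul_right_eq_zero.mp h1
    obtain ⟨y, hy⟩ := aux_pow_dvd p i (i - 1) (Nat.sub_le i 1) x hpx
    refine ⟨y, ?_⟩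
    rw [hy, hNp, Nat.sub_sub_self hi1, pow_one]
  · -- kernel of `N = p` is contained in `ε · M = (w-1) · M`
    intro x hx
    rw [hNp] at hx
    have hpx : (p : ZMod (p ^ i)) ^ 1 * x = 0 := by rwa [pow_one]
    obtain ⟨y0, hy0⟩ := aux_pow_dvd p i 1 hi1 x hpx
    refine ⟨(↑u⁻¹ : ZMod (p ^ i)) * y0, ?_⟩
    have hzuinv : (z : ZMod (p ^ i)) * (↑u⁻¹ : ZMod (p ^ i)) = 1 := by
      rw [← hu]; exact u.mul_inv
    calc x = (p : ZMod (p ^ i)) ^ (i - 1) * y0 := hy0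
      _ = (p : ZMod (p ^ i)) ^ (i - 1) * (((z : ZMod (p ^ i)) * (↑u⁻¹ : ZMod (p ^ i))) * y0) := by
            rw [hzuinv, one_mul]
      _ = ε * ((↑u⁻¹ : ZMod (p ^ i)) * y0) := by rw [hε]; ring
      _ = w * ((↑u⁻¹ : ZMod (p ^ i)) * y0) - (↑u⁻¹ : ZMod (p ^ i)) * y0 := by
            rw [hw]; ring
end

section
/- Let p be an odd prime, G cyclic of order p, and i >= 1, with F_i the cyclic group Z/p^i Z equipped with a nontrivial G-action (a generator acts by a unit w congruent to 1 mod p^{i-1}, w != 1). Then for every Z_p[G]-lattice M_f (a finitely generated Z_p-free Z_p[G]-module), Ext^1_{Z_p[G]}(M_f, F_i) = 0. -/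
lemma stmt4_keyA (p i : ℕ) (hp : p.Prime) (hodd : Odd p) (hi : 2 ≤ i) (z : ℤ) :
    ∃ m : ℤ, (1 + (p : ℤ) ^ (i - 1) * z) ^ p = 1 + (p : ℤ) ^ i * z + (p : ℤ) ^ (i + 1) * m := by
  have hp3 : 3 ≤ p := by
    have h2 := hp.two_le
    rcases Nat.lt_or_ge p 3 with h | h
    · interval_cases p
      · exact absurd hodd (by decide)
    · exact h
  set t : ℤ := (p : ℤ) ^ (i - 1) * z with ht
  have hadd : (t + 1) ^ p = ∑ k ∈ Finset.range (p + 1), t ^ k * (p.choose k : ℤ) := by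
    rw [add_pow]
    apply Finset.sum_congr rfl
    intro k hk
    rw [one_pow, mul_one]
  have hpeel : ∑ k ∈ Finset.range (p + 1), t ^ k * (p.choose k : ℤ)
      = (∑ k ∈ Finset.range (p - 1), t ^ (k + 2) * (p.choose (k + 2) : ℤ))
        + t * (p : ℤ) + 1 := by
    have h1 : p + 1 = (p - 1) + 1 + 1 := by omega
    rw [h1, Finset.sum_range_succ', Finset.sum_range_succ']
    simp [Nat.choose_one_right]
  have hdvd : ((p : ℤ) ^ (i + 1)) ∣ ∑ k ∈ Finset.range (p - 1), t ^ (k + 2) * (p.choose (k + 2) : ℤ) := by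
    apply Finset.dvd_sum
    intro k hk
    simp only [Finset.mem_range] at hk
    have htk : ((p : ℤ) ^ ((i - 1) * (k + 2))) ∣ t ^ (k + 2) := by
      rw [ht, mul_pow, pow_mul]
      exact Dvd.intro _ rfl
    rcases Nat.lt_or_ge (k + 2) p with hlt | hge
    · have hc : (p : ℤ) ∣ (p.choose (k + 2) : ℤ) := by
        exact_mod_cast Int.natCast_dvd_natCast.mpr (hp.dvd_choose_self (by omega) hlt)
      have h2 : ((p : ℤ) ^ ((i - 1) * (k + 2) + 1)) ∣ t ^ (k + 2) * (p.choose (k + 2) : ℤ) := by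
        rw [pow_succ]
        exact mul_dvd_mul htk hc
      refine dvd_trans (pow_dvd_pow _ ?_) h2
      have : 2 * (i - 1) ≤ (i - 1) * (k + 2) := by
        have := Nat.mul_le_mul_left (i - 1) (show 2 ≤ k + 2 by omega)
        omega
      omega
    · refine dvd_trans (pow_dvd_pow _ ?_) (Dvd.dvd.mul_right htk _)
      have : 3 * (i - 1) ≤ (i - 1) * (k + 2) := by
        have := Nat.mul_le_mul_left (i - 1) (show 3 ≤ k + 2 by omega)
        omega
      omega
  obtain ⟨m, hm⟩ := hdvd
  refine ⟨m, ?_⟩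
  have hpt : t * (p : ℤ) = (p : ℤ) ^ i * z := by
    rw [ht]
    have hps : (p : ℤ) ^ (i - 1) * (p : ℤ) = (p : ℤ) ^ i := by
      rw [← pow_succ]
      congr 1
      omega
    rw [mul_comm, ← mul_assoc, mul_comm (p:ℤ) ((p:ℤ)^(i-1)), hps]
  calc (1 + t) ^ p = (t + 1) ^ p := by ring
    _ = _ := by rw [hadd, hpeel, hm, hpt]; ring

lemma stmt4_tele {M : Type} [AddCommGroup M] (f : ℕ → M) (n : ℕ) :
    (∑ k ∈ Finset.range n, f k) - ∑ k ∈ Finset.range n, f (k + 1) = f 0 - f n := by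
  have h := Finset.sum_range_sub f n
  rw [Finset.sum_sub_distrib] at h
  rw [← neg_sub, h, neg_sub]

set_option maxHeartbeats 1000000 in
theorem stmt_4 (p i : ℕ) [Fact p.Prime] (hp : Odd p) (hi : 1 ≤ i)
    (z : ℤ) (hz : ¬ (p : ℤ) ∣ z)
    (w : ZMod (p ^ i)) (hw : w = 1 + (p : ZMod (p ^ i)) ^ (i - 1) * (z : ZMod (p ^ i)))
    (hw1 : w ≠ 1)
    -- the module F_i
    (F : Type) [AddCommGroup F] [Module ℤ_[p] F] (TF : Module.End ℤ_[p] F)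
    (eF : F ≃+ ZMod (p ^ i)) (heF : ∀ x : F, eF (TF x) = w * eF x)
    (heFs : ∀ (c : ℤ_[p]) (x : F), eF (c • x) = PadicInt.toZModPow i c * eF x)
    -- an arbitrary lattice M_f
    (Mf : Type) [AddCommGroup Mf] [Module ℤ_[p] Mf] [Module.Finite ℤ_[p] Mf]
    [Module.Free ℤ_[p] Mf] (T : Module.End ℤ_[p] Mf) (hT : T ^ p = 1)
    -- an arbitrary extension 0 → F → E → M_f → 0 of ℤ_p[G]-modules
    (E : Type) [AddCommGroup E] [Module ℤ_[p] E] (S : Module.End ℤ_[p] E) (hS : S ^ p = 1)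
    (ι : F →ₗ[ℤ_[p]] E) (π : E →ₗ[ℤ_[p]] Mf)
    (hι : Function.Injective ι) (hπ : Function.Surjective π)
    (hexact : Function.Exact ι π)
    (hιe : ∀ x, ι (TF x) = S (ι x)) (hπe : ∀ x, π (S x) = T (π x)) :
    ∃ s : Mf →ₗ[ℤ_[p]] E, π.comp s = LinearMap.id ∧ ∀ x, s (T x) = S (s x) := by
  classical
  have hppr : p.Prime := Fact.out
  have hιpow : ∀ (n : ℕ) (x : F), ι ((TF ^ n) x) = (S ^ n) (ι x) := by
    intro n
    induction n with
    | zero => intro x; simp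
    | succ n ih =>
      intro x
      rw [pow_succ, Module.End.mul_apply, ih (TF x), hιe, pow_succ, Module.End.mul_apply]
  by_cases hi2 : 2 ≤ i
  swap
  · -- case i = 1 : contradiction
    exfalso
    have hi1 : i = 1 := by omega
    have hTFp : ∀ x : F, (TF ^ p) x = x := by
      intro x
      apply hι
      rw [hιpow, hS, Module.End.one_apply]
    have heFpow : ∀ (n : ℕ) (x : F), eF ((TF ^ n) x) = w ^ n * eF x := by
      intro n
      induction n with
      | zero => intro x; simp
      | succ n ih =>
        intro x
        rw [pow_succ, Module.End.mul_apply, ih (TF x), heF, pow_succ]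
        ring
    have hwp : w ^ p = 1 := by
      have h := heFpow p (eF.symm 1)
      rw [hTFp] at h
      simpa using h.symm
    have hdvdp : p ∣ p ^ i := dvd_pow_self p (by omega)
    set φ : ZMod (p ^ i) →+* ZMod p := ZMod.castHom hdvdp (ZMod p) with hφ
    have h1 : (φ w) ^ p = 1 := by rw [← map_pow, hwp, map_one]
    have h2 : φ w = 1 := by rw [← ZMod.pow_card (φ w), h1]
    have hi0 : i - 1 = 0 := by omega
    have h3 : φ w = 1 + (z : ZMod p) := by
      rw [hw, hi0, pow_zero, one_mul, map_add, map_one, map_intCast]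
    rw [h3] at h2
    have h4 : (z : ZMod p) = 0 := by
      rwa [add_eq_left] at h2
    rw [ZMod.intCast_zmod_eq_zero_iff_dvd] at h4
    exact hz (by exact_mod_cast h4)
  -- main case 2 ≤ i
  have hp2 : 2 ≤ p := hppr.two_le
  haveI : NeZero (p ^ i) := ⟨pow_ne_zero _ hppr.ne_zero⟩
  set Tinv : Module.End ℤ_[p] Mf := T ^ (p - 1) with hTinvdef
  have hTinv : ∀ x, Tinv (T x) = x := by
    intro x
    have h : Tinv * T = 1 := by
      rw [hTinvdef, ← pow_succ, show p - 1 + 1 = p by omega, hT]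
    calc Tinv (T x) = (Tinv * T) x := rfl
      _ = x := by rw [h, Module.End.one_apply]
  have hTinv' : ∀ x, T (Tinv x) = x := by
    intro x
    have h : T * Tinv = 1 := by
      rw [hTinvdef, ← pow_succ', show p - 1 + 1 = p by omega, hT]
    calc T (Tinv x) = (T * Tinv) x := rfl
      _ = x := by rw [h, Module.End.one_apply]
  have hTinvp : Tinv ^ p = 1 := by
    rw [hTinvdef, ← pow_mul, mul_comm, pow_mul, hT, one_pow]
  -- the scalar W
  set W : ℤ_[p] := ((1 + (p:ℤ)^(i-1) * z : ℤ) : ℤ_[p]) with hW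
  have hWmod : PadicInt.toZModPow i W = w := by
    rw [hW, map_intCast, hw]
    push_cast
    ring
  have hTF : ∀ x : F, TF x = W • x := by
    intro x
    apply eF.injective
    rw [heF, heFs, hWmod]
  -- the reduction map q : ℤ_[p] → F
  set q : ℤ_[p] →ₗ[ℤ_[p]] F :=
    { toFun := fun c => eF.symm (PadicInt.toZModPow i c)
      map_add' := by intro a b; simp [map_add]
      map_smul' := by
        intro a c
        apply eF.injective
        rw [RingHom.id_apply, heFs]
        simp [smul_eq_mul, map_mul] } with hqdef
  have hqapp : ∀ c, eF (q c) = PadicInt.toZModPow i c := by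
    intro c
    simp [hqdef]
  have hqsurj : Function.Surjective q := by
    intro y
    refine ⟨((eF y).val : ℕ), ?_⟩
    apply eF.injective
    rw [hqapp, map_natCast]
    simp [ZMod.natCast_val, ZMod.cast_id]
  have hkerq : ∀ c : ℤ_[p], q c = 0 → (p:ℤ_[p])^i ∣ c := by
    intro c hc
    have h0 : PadicInt.toZModPow i c = 0 := by
      have := congrArg eF hc
      rw [hqapp] at this
      simpa using this
    have hmem : c ∈ RingHom.ker (PadicInt.toZModPow (p := p) i) := h0
    rwa [PadicInt.ker_toZModPow, Ideal.mem_span_singleton] at hmem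
  -- a linear section s₀
  obtain ⟨s₀, hs₀⟩ := Module.projective_lifting_property π LinearMap.id hπ
  have hs₀' : ∀ x, π (s₀ x) = x := by
    intro x
    have := DFunLike.congr_fun hs₀ x
    simpa using this
  -- the twisted family A k = S^k ∘ s₀ ∘ Tinv^k
  set A : ℕ → (Mf →ₗ[ℤ_[p]] E) := fun k => (S ^ k) ∘ₗ s₀ ∘ₗ (Tinv ^ k) with hAdef
  have hA0 : A 0 = s₀ := by
    simp [hAdef, Module.End.one_eq_id]
  have hAp : A p = s₀ := by
    simp [hAdef, hS, hTinvp, Module.End.one_eq_id]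
  have hAsucc : ∀ (k : ℕ) (x : Mf), S (A k (Tinv x)) = A (k + 1) x := by
    intro k x
    simp only [hAdef, LinearMap.comp_apply]
    rw [pow_succ' S, pow_succ Tinv, Module.End.mul_apply, Module.End.mul_apply]
  -- the cocycle D = A 1 - A 0 and its factorization d through F
  set D : Mf →ₗ[ℤ_[p]] E := A 1 - A 0 with hD
  have hπA1 : ∀ x, π (A 1 x) = x := by
    intro x
    simp only [hAdef, LinearMap.comp_apply, pow_one]
    rw [hπe, hs₀', hTinv']
  have hπD : ∀ x, π (D x) = 0 := by
    intro x
    rw [hD]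
    simp only [LinearMap.sub_apply, map_sub]
    rw [hπA1, hA0, hs₀', sub_self]
  have hDr : ∀ x, ∃ y : F, ι y = D x := fun x => (hexact (D x)).mp (hπD x)
  set d : Mf →ₗ[ℤ_[p]] F :=
    { toFun := fun x => (hDr x).choose
      map_add' := by
        intro a b
        apply hι
        rw [map_add ι, (hDr (a + b)).choose_spec, (hDr a).choose_spec, (hDr b).choose_spec,
          map_add]
      map_smul' := by
        intro c a
        apply hι
        rw [RingHom.id_apply, map_smul ι, (hDr (c • a)).choose_spec, (hDr a).choose_spec,
          map_smul] } with hddef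
  have hd : ∀ x, ι (d x) = D x := fun x => (hDr x).choose_spec
  -- lift d to dt : Mf → ℤ_[p]
  obtain ⟨dt, hdt⟩ := Module.projective_lifting_property q d hqsurj
  have hdt' : ∀ x, q (dt x) = d x := fun x => DFunLike.congr_fun hdt x
  -- twisted families B (in ℤ_[p]) and C (in F)
  set B : ℕ → (Mf →ₗ[ℤ_[p]] ℤ_[p]) := fun k => W ^ k • (dt ∘ₗ (Tinv ^ k)) with hBdef
  set C : ℕ → (Mf →ₗ[ℤ_[p]] F) := fun k => W ^ k • (d ∘ₗ (Tinv ^ k)) with hCdef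
  have hqB : ∀ k x, q (B k x) = C k x := by
    intro k x
    simp only [hBdef, hCdef, LinearMap.smul_apply, LinearMap.comp_apply, map_smul, hdt']
  have hB0 : B 0 = dt := by simp [hBdef, Module.End.one_eq_id]
  have hBp : B p = W ^ p • dt := by simp [hBdef, hTinvp, Module.End.one_eq_id]
  have hTinvsucc : ∀ (k : ℕ) (x : Mf), (Tinv ^ k) (Tinv x) = (Tinv ^ (k + 1)) x := by
    intro k x
    rw [pow_succ, Module.End.mul_apply]
  have hBsucc : ∀ k x, W • (B k (Tinv x)) = B (k + 1) x := by
    intro k x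
    simp only [hBdef, LinearMap.smul_apply, LinearMap.comp_apply, hTinvsucc, smul_smul,
      ← pow_succ']
  have hCsucc : ∀ k x, W • (C k (Tinv x)) = C (k + 1) x := by
    intro k x
    simp only [hCdef, LinearMap.smul_apply, LinearMap.comp_apply, hTinvsucc, smul_smul,
      ← pow_succ']
  have hC0 : ∀ x, C 0 x = d x := by
    intro x
    simp [hCdef]
  -- relating C to the extension
  have hιW : ∀ y : F, ι (W • y) = S (ι y) := by
    intro y
    rw [← hTF, hιe]
  have hιC : ∀ (k : ℕ) (x : Mf), ι (C k x) = A (k + 1) x - A k x := by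
    intro k
    induction k with
    | zero =>
      intro x
      rw [hC0, hd, hD]
      simp [hA0]
    | succ k ih =>
      intro x
      rw [← hCsucc k x, hιW, ih (Tinv x), map_sub, hAsucc, hAsucc]
  -- the norm sums
  have hCsum : ∀ x, (∑ k ∈ Finset.range p, C k x) = 0 := by
    intro x
    apply hι
    rw [map_sum, map_zero]
    rw [Finset.sum_congr rfl (fun k _ => hιC k x), Finset.sum_range_sub (fun k => A k x) p,
      hAp, hA0, sub_self]
  set gt : Mf →ₗ[ℤ_[p]] ℤ_[p] := ∑ k ∈ Finset.range p, B k with hgt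
  have hgtapp : ∀ x, gt x = ∑ k ∈ Finset.range p, B k x := by
    intro x
    rw [hgt]
    simp [LinearMap.sum_apply]
  have hBsum : ∀ x, (p:ℤ_[p])^i ∣ gt x := by
    intro x
    apply hkerq
    rw [hgtapp, map_sum]
    calc ∑ k ∈ Finset.range p, q (B k x) = ∑ k ∈ Finset.range p, C k x :=
          Finset.sum_congr rfl (fun k _ => hqB k x)
      _ = 0 := hCsum x
  -- divide gt by p^i
  have hdiv : ∀ x, ∃ y : ℤ_[p], (p:ℤ_[p])^i * y = gt x := by
    intro x
    obtain ⟨y, hy⟩ := hBsum x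
    exact ⟨y, hy.symm⟩
  have hPne : ((p:ℤ_[p])^i) ≠ 0 := by
    apply pow_ne_zero
    exact_mod_cast hppr.ne_zero
  set e : Mf →ₗ[ℤ_[p]] ℤ_[p] :=
    { toFun := fun x => (hdiv x).choose
      map_add' := by
        intro a b
        apply mul_left_cancel₀ hPne
        rw [(hdiv (a + b)).choose_spec, mul_add, (hdiv a).choose_spec, (hdiv b).choose_spec,
          map_add]
      map_smul' := by
        intro c a
        apply mul_left_cancel₀ hPne
        rw [RingHom.id_apply, smul_eq_mul, mul_left_comm, (hdiv a).choose_spec,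
          (hdiv (c • a)).choose_spec, map_smul, smul_eq_mul] } with hedef
  have he : ∀ x, (p:ℤ_[p])^i * e x = gt x := fun x => (hdiv x).choose_spec
  -- the unit u with W^p = 1 + p^i u
  obtain ⟨m, hm⟩ := stmt4_keyA p i hppr hp hi2 z
  set u : ℤ_[p] := ((z + p * m : ℤ) : ℤ_[p]) with hu
  have hWp : W ^ p = 1 + (p:ℤ_[p])^i * u := by
    rw [hW, hu, ← Int.cast_pow, hm]
    push_cast
    ring
  have hunit : IsUnit u := by
    by_contra hnu
    have hmem : u ∈ IsLocalRing.maximalIdeal ℤ_[p] := (IsLocalRing.mem_maximalIdeal u).mpr (mem_nonunits_iff.mpr hnu)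
    rw [PadicInt.maximalIdeal_eq_span_p, Ideal.mem_span_singleton] at hmem
    obtain ⟨c, hc⟩ := hmem
    have h0 : (PadicInt.toZMod u : ZMod p) = 0 := by
      rw [hc, map_mul]
      have hp0 : (PadicInt.toZMod (p:ℤ_[p]) : ZMod p) = 0 := by
        rw [map_natCast, ZMod.natCast_self]
      rw [hp0, zero_mul]
    rw [hu, map_intCast] at h0
    push_cast at h0
    rw [ZMod.natCast_self, zero_mul, add_zero] at h0
    rw [ZMod.intCast_zmod_eq_zero_iff_dvd] at h0
    exact hz (by exact_mod_cast h0)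
  obtain ⟨v, hv⟩ := isUnit_iff_exists_inv.mp hunit
  -- telescoping identity for gt
  have htele : ∀ x, gt x - W • gt (Tinv x) = dt x - W ^ p • dt x := by
    intro x
    have h2 : W • gt (Tinv x) = ∑ k ∈ Finset.range p, B (k + 1) x := by
      rw [hgtapp, Finset.smul_sum]
      exact Finset.sum_congr rfl fun k _ => hBsucc k x
    rw [hgtapp, h2]
    have h3 := stmt4_tele (fun k => B k x) p
    rw [h3]
    rw [show B 0 = dt from hB0, show B p = W ^ p • dt from hBp, LinearMap.smul_apply]
  -- the solution for e
  have hee : ∀ x, e x - W * e (Tinv x) = -(u * dt x) := by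
    intro x
    apply mul_left_cancel₀ hPne
    have h1 := he x
    have h2 := he (Tinv x)
    have h3 := htele x
    rw [smul_eq_mul, smul_eq_mul, hWp] at h3
    linear_combination h1 - W * h2 + h3
  set ht : Mf →ₗ[ℤ_[p]] ℤ_[p] := (-v) • e with hhtdef
  have hht : ∀ x, ht x - W * ht (Tinv x) = dt x := by
    intro x
    have h := hee x
    simp only [hhtdef, LinearMap.smul_apply, smul_eq_mul]
    linear_combination (-v) * h + (dt x) * hv
  -- push down to F
  set hF : Mf →ₗ[ℤ_[p]] F := q ∘ₗ ht with hhFdef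
  have hhF : ∀ x, hF x - W • hF (Tinv x) = d x := by
    intro x
    have h := congrArg q (hht x)
    rw [map_sub, hdt'] at h
    rw [← h]
    simp only [hhFdef, LinearMap.comp_apply]
    congr 1
    rw [← smul_eq_mul, map_smul]
  -- assemble the equivariant section
  refine ⟨s₀ + ι ∘ₗ hF, ?_, ?_⟩
  · ext x
    simp only [LinearMap.comp_apply, LinearMap.add_apply, map_add, LinearMap.id_apply]
    rw [hs₀', hexact.apply_apply_eq_zero, add_zero]
  · intro x
    simp only [LinearMap.add_apply, LinearMap.comp_apply, map_add]
    have h1 : hF (T x) = d (T x) + W • hF x := by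
      have h := hhF (T x)
      rw [hTinv x] at h
      exact eq_add_of_sub_eq h
    have h2 : ι (d (T x)) = S (s₀ x) - s₀ (T x) := by
      rw [hd, hD]
      simp only [LinearMap.sub_apply]
      have hA1 : A 1 (T x) = S (s₀ x) := by
        simp only [hAdef, LinearMap.comp_apply, pow_one]
        rw [hTinv x]
      rw [hA1, hA0]
    rw [h1, map_add, h2, hιW]
    abel
end

section
/- Let p be an odd prime, G cyclic of order p, and i >= 1. Then Ext^1_{Z_p[G]}(Z_p, Z/p^i Z) and Ext^1_{Z_p[G]}(A, Z/p^i Z) are both isomorphic to Z/pZ, where Z_p and Z/p^i Z carry the trivial G-action and A is the augmentation kernel of the norm map Z_p[G] -> Z_p. -/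
/-!
STATEMENT 5: `p` odd prime, `G` cyclic of order `p` (realised as
`Multiplicative (ZMod p)`), `i ≥ 1`.  In the category of modules over the
group ring `ℤ_[p][G]`, we have
`Ext¹(ℤ_p, ZMod (p^i)) ≃ ZMod p` and `Ext¹(A, ZMod (p^i)) ≃ ZMod p`,
where `ℤ_p` and `ZMod (p^i)` carry the trivial `G`-action (via the
augmentation map) and `A` is the augmentation ideal
`ker (Norm : ℤ_[p][G] → ℤ_[p])`.
-/

open CategoryTheory

abbrev Gc (p : ℕ) := Multiplicative (ZMod p)

abbrev GrpRing (p : ℕ) [Fact p.Prime] := MonoidAlgebra ℤ_[p] (Gc p)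

/-- The augmentation (norm) map `ℤ_[p][G] → ℤ_[p]`, sending every group
element to `1`. -/
noncomputable def augm (p : ℕ) [Fact p.Prime] : GrpRing p →ₐ[ℤ_[p]] ℤ_[p] :=
  MonoidAlgebra.lift ℤ_[p] ℤ_[p] (Gc p) 1

/-- `ℤ_[p]` with the trivial `G`-action, as a `ℤ_[p][G]`-module. -/
def TrivZp (p : ℕ) [Fact p.Prime] : Type := ℤ_[p]

noncomputable instance (p : ℕ) [Fact p.Prime] : AddCommGroup (TrivZp p) :=
  inferInstanceAs (AddCommGroup ℤ_[p])

noncomputable instance (p : ℕ) [Fact p.Prime] : Module (GrpRing p) (TrivZp p) :=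
  Module.compHom ℤ_[p] (augm p).toRingHom

/-- `ZMod (p^i)` with the trivial `G`-action, as a `ℤ_[p][G]`-module. -/
def TrivZmod (p i : ℕ) [Fact p.Prime] : Type := ZMod (p ^ i)

noncomputable instance (p i : ℕ) [Fact p.Prime] : AddCommGroup (TrivZmod p i) :=
  inferInstanceAs (AddCommGroup (ZMod (p ^ i)))

noncomputable instance (p i : ℕ) [Fact p.Prime] : Module (GrpRing p) (TrivZmod p i) :=
  Module.compHom (ZMod (p ^ i)) ((PadicInt.toZModPow i).comp (augm p).toRingHom)

/-- The augmentation ideal `A = ker (Norm : ℤ_[p][G] → ℤ_[p])`, as a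
`ℤ_[p][G]`-module. -/
noncomputable def AugId (p : ℕ) [Fact p.Prime] : Ideal (GrpRing p) :=
  RingHom.ker (augm p).toRingHom

namespace Aux
variable (p : ℕ) [Fact p.Prime]

noncomputable def sg : GrpRing p := MonoidAlgebra.of ℤ_[p] (Gc p) (Multiplicative.ofAdd 1)
noncomputable def tt : GrpRing p := sg p - 1
noncomputable def NN : GrpRing p := ∑ g : Gc p, MonoidAlgebra.of ℤ_[p] (Gc p) g

lemma augm_of (g : Gc p) : augm p (MonoidAlgebra.of ℤ_[p] (Gc p) g) = 1 := by
  rw [augm, MonoidAlgebra.lift_of]; rfl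

lemma augm_single (g : Gc p) (c : ℤ_[p]) : augm p (MonoidAlgebra.single g c) = c := by
  rw [augm, MonoidAlgebra.lift_single]; simp

lemma augm_tt : augm p (tt p) = 0 := by
  rw [tt, map_sub, sg, augm_of, map_one]; ring

lemma augm_NN : augm p (NN p) = p := by
  rw [NN, map_sum]
  simp only [augm_of]
  simp [ZMod.card]

lemma of_pow (n : ℕ) : MonoidAlgebra.of ℤ_[p] (Gc p) (Multiplicative.ofAdd (n : ZMod p)) = (sg p) ^ n := by
  rw [sg, ← map_pow]
  congr 1
  rw [← ofAdd_nsmul]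
  norm_num

lemma of_sub_one_mem (g : Gc p) :
    MonoidAlgebra.of ℤ_[p] (Gc p) g - 1 ∈ Ideal.span {tt p} := by
  obtain ⟨n, rfl⟩ : ∃ n : ℕ, g = Multiplicative.ofAdd (n : ZMod p) :=
    ⟨(Multiplicative.toAdd g).val, by simp⟩
  rw [of_pow]
  have h := geom_sum_mul (sg p) n
  rw [Ideal.mem_span_singleton]
  exact ⟨∑ i ∈ Finset.range n, sg p ^ i, by rw [← h, tt]; ring⟩

lemma sub_augm_mem (x : GrpRing p) : x - (augm p x) • 1 ∈ Ideal.span {tt p} := by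
  induction x using MonoidAlgebra.induction_on with
  | of g =>
      have := of_sub_one_mem p g
      rw [augm_of]
      simpa using this
  | add f g hf hg =>
      have := Submodule.add_mem _ hf hg
      rw [map_add, add_smul]
      convert this using 1
      abel
  | smul r f hf =>
      have := Submodule.smul_of_tower_mem _ r hf
      rw [show augm p (r • f) = r • augm p f from map_smul (augm p).toLinearMap r f]
      convert this using 1
      rw [smul_sub, smul_smul]
      norm_num

lemma mem_span_tt_of_augm_eq_zero {x : GrpRing p} (hx : augm p x = 0) :
    x ∈ Ideal.span {tt p} := by
  have := sub_augm_mem p x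
  simpa [hx] using this

lemma of_mul_NN (g : Gc p) : MonoidAlgebra.of ℤ_[p] (Gc p) g * NN p = NN p := by
  rw [NN, Finset.mul_sum]
  rw [← Fintype.sum_equiv (Equiv.mulLeft g) _ (fun h => MonoidAlgebra.of ℤ_[p] (Gc p) h)]
  intro h
  rw [← map_mul]
  rfl

lemma NN_mul (x : GrpRing p) : NN p * x = (augm p x) • NN p := by
  induction x using MonoidAlgebra.induction_on with
  | of g => rw [mul_comm, of_mul_NN, augm_of, one_smul]
  | add f g hf hg => rw [mul_add, hf, hg, map_add, add_smul]
  | smul r f hf =>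
      rw [mul_smul_comm, hf, show augm p (r • f) = r • augm p f from
        map_smul (augm p).toLinearMap r f, smul_assoc]

lemma NN_apply_one : (NN p).coeff (1 : Gc p) = 1 := by
  classical
  rw [NN]
  rw [MonoidAlgebra.coeff_sum, Finsupp.finset_sum_apply]
  rw [Finset.sum_eq_single (1 : Gc p)]
  · simp [MonoidAlgebra.of_apply, MonoidAlgebra.single_apply]
  · intro b _ hb
    simp [MonoidAlgebra.of_apply, MonoidAlgebra.single_apply, hb]
  · simp

lemma smul_NN_eq_zero {c : ℤ_[p]} (h : c • NN p = 0) : c = 0 := by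
  have h2 := congrArg (fun f : GrpRing p => f.coeff (1 : Gc p)) h
  have h3 : c * (NN p).coeff (1 : Gc p) = 0 := h2
  rwa [NN_apply_one, mul_one] at h3

lemma tt_mul_NN : tt p * NN p = 0 := by
  rw [mul_comm, NN_mul, augm_tt, zero_smul]

lemma ker_NN {x : GrpRing p} (h : NN p * x = 0) : ∃ y, x = tt p * y := by
  rw [NN_mul] at h
  have := smul_NN_eq_zero p h
  have hx := mem_span_tt_of_augm_eq_zero p this
  rw [Ideal.mem_span_singleton'] at hx
  obtain ⟨a, ha⟩ := hx
  exact ⟨a, by rw [← ha, mul_comm]⟩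

lemma NN_apply (g : Gc p) : (NN p).coeff g = 1 := by
  classical
  rw [NN, MonoidAlgebra.coeff_sum, Finsupp.finset_sum_apply, Finset.sum_eq_single g]
  · simp [MonoidAlgebra.of_apply, MonoidAlgebra.single_apply]
  · intro b _ hb
    simp [MonoidAlgebra.of_apply, MonoidAlgebra.single_apply, hb]
  · simp

lemma ker_tt {x : GrpRing p} (h : tt p * x = 0) : ∃ y, x = NN p * y := by
  have hs : sg p * x = x := by
    have h1 : (sg p - 1) * x = 0 := h
    rw [sub_mul, one_mul, sub_eq_zero] at h1
    exact h1
  have hpow : ∀ n : ℕ, (sg p) ^ n * x = x := by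
    intro n; induction n with
    | zero => simp
    | succ n ih => rw [pow_succ, mul_comm ((sg p)^n) (sg p), mul_assoc, ih, hs]
  have hcoef : ∀ g : Gc p, x.coeff g = x.coeff (1 : Gc p) := by
    intro g
    set n := (Multiplicative.toAdd g).val with hn
    have hg : Multiplicative.ofAdd ((n : ZMod p)) = g := by
      rw [hn]; simp
    have h2 := congrArg (fun f : GrpRing p => f.coeff g) (hpow n)
    rw [← of_pow, MonoidAlgebra.of_apply] at h2
    rw [MonoidAlgebra.coeff_single_mul_apply, hg, inv_mul_cancel, one_mul] at h2
    exact h2.symm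
  refine ⟨(x.coeff (1 : Gc p)) • 1, ?_⟩
  rw [mul_smul_comm, mul_one]
  apply MonoidAlgebra.coeff_injective
  apply Finsupp.ext
  intro g
  have hr : (x.coeff (1 : Gc p) • NN p).coeff g = x.coeff (1 : Gc p) * (NN p).coeff g := rfl
  rw [hr, NN_apply, mul_one]
  exact hcoef g

lemma NN_mul_tt : NN p * tt p = 0 := by rw [mul_comm]; exact tt_mul_NN p

lemma augm_surj : Function.Surjective (augm p) := fun c =>
  ⟨MonoidAlgebra.single 1 c, augm_single p 1 c⟩

lemma exact_NN_tt {x : GrpRing p} (h : tt p * x = 0) : ∃ y, NN p * y = x := by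
  obtain ⟨y, hy⟩ := ker_tt p h
  exact ⟨y, hy.symm⟩

lemma exact_tt_NN {x : GrpRing p} (h : NN p * x = 0) : ∃ y, tt p * y = x := by
  obtain ⟨y, hy⟩ := ker_NN p h
  exact ⟨y, hy.symm⟩

open CategoryTheory Limits
variable (p : ℕ) [Fact p.Prime]

noncomputable abbrev Rm : ModuleCat (GrpRing p) := ModuleCat.of (GrpRing p) (GrpRing p)

instance : Projective (Rm p) :=
  (IsProjective.iff_projective _).1 inferInstance

noncomputable def mulMap (r : GrpRing p) : Rm p ⟶ Rm p :=
  ModuleCat.ofHom (LinearMap.mulLeft (GrpRing p) r)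

lemma mulMap_apply (r x : GrpRing p) : mulMap p r x = r * x := rfl

lemma mulMap_zero : mulMap p 0 = 0 :=
  ModuleCat.hom_ext (LinearMap.ext fun (x : GrpRing p) => zero_mul x)

noncomputable def tpow : ℕ → GrpRing p
  | 0 => tt p
  | 1 => NN p
  | n + 2 => tpow n

lemma tpow_succ_mul_tpow (n : ℕ) : tpow p (n + 1) * tpow p n = 0 := by
  induction n using Nat.twoStepInduction with
  | zero => exact NN_mul_tt p
  | one => exact tt_mul_NN p
  | more n ih _ => exact ih

lemma tpow_exact (n : ℕ) (x : GrpRing p) (h : tpow p n * x = 0) :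
    ∃ y, tpow p (n + 1) * y = x := by
  induction n using Nat.twoStepInduction with
  | zero => exact exact_NN_tt p h
  | one => exact exact_tt_NN p h
  | more n ih _ => exact ih h

noncomputable def cxd (f : ℕ → GrpRing p) (i j : ℕ) : GrpRing p :=
  if i = j + 1 then f j else 0

noncomputable def cx (f : ℕ → GrpRing p) (hf : ∀ n, f (n + 1) * f n = 0) :
    ChainComplex (ModuleCat (GrpRing p)) ℕ where
  X _ := Rm p
  d i j := mulMap p (cxd p f i j)
  shape i j h := by
    have h' : ¬ (i = j + 1) := fun hc => h (by simpa using hc.symm)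
    show mulMap p (cxd p f i j) = 0
    rw [show cxd p f i j = 0 from if_neg h', mulMap_zero]
  d_comp_d' i j k hij hjk := by
    simp only [ComplexShape.down_Rel] at hij hjk
    subst hij hjk
    apply ModuleCat.hom_ext
    apply LinearMap.ext
    intro (x : GrpRing p)
    show cxd p f (k + 1) k * (cxd p f (k + 1 + 1) (k + 1) * x) = 0
    rw [show cxd p f (k + 1) k = f k from if_pos rfl,
      show cxd p f (k + 1 + 1) (k + 1) = f (k + 1) from if_pos rfl,
      ← mul_assoc, mul_comm (f k) (f (k + 1)), hf, zero_mul]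

lemma cx_d (f : ℕ → GrpRing p) (hf : ∀ n, f (n + 1) * f n = 0) (n : ℕ) (x : GrpRing p) :
    ((cx p f hf).d (n + 1) n : Rm p ⟶ Rm p) x = f n * x := by
  show cxd p f (n + 1) n * x = f n * x
  rw [show cxd p f (n + 1) n = f n from if_pos rfl]

lemma cx_exactAt (f : ℕ → GrpRing p) (hf : ∀ n, f (n + 1) * f n = 0)
    (hex : ∀ n (x : GrpRing p), f n * x = 0 → ∃ y, f (n + 1) * y = x) (n : ℕ) :
    (cx p f hf).ExactAt (n + 1) := by
  rw [HomologicalComplex.exactAt_iff' _ (n + 2) (n + 1) n (by simp) (by simp)]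
  rw [ShortComplex.moduleCat_exact_iff]
  intro (x : GrpRing p) hx
  have hx' : cxd p f (n + 1) n * x = 0 := hx
  rw [show cxd p f (n + 1) n = f n from if_pos rfl] at hx'
  obtain ⟨y, hy⟩ := hex n x hx'
  refine ⟨y, ?_⟩
  show cxd p f (n + 2) (n + 1) * y = x
  rw [show cxd p f (n + 2) (n + 1) = f (n + 1) from if_pos rfl]
  exact hy

noncomputable def cxZp : ChainComplex (ModuleCat (GrpRing p)) ℕ :=
  cx p (tpow p) (tpow_succ_mul_tpow p)

noncomputable def cxA : ChainComplex (ModuleCat (GrpRing p)) ℕ :=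
  cx p (fun n => tpow p (n + 1)) (fun n => tpow_succ_mul_tpow p (n + 1))

noncomputable def augLin : Rm p ⟶ ModuleCat.of (GrpRing p) (TrivZp p) :=
  ModuleCat.ofHom
  { toFun := fun x => (augm p x : TrivZp p)
    map_add' := fun x y => map_add (augm p) x y
    map_smul' := fun r x => map_mul (augm p) r x }

lemma augLin_apply (x : GrpRing p) : (augLin p x : ℤ_[p]) = augm p x := rfl

lemma augLin_surj : Function.Surjective (augLin p) := fun c =>
  ⟨MonoidAlgebra.single 1 (c : ℤ_[p]), augm_single p 1 (c : ℤ_[p])⟩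


lemma resZpW : (cxZp p).d 1 0 ≫ augLin p = 0 := by
  apply ModuleCat.hom_ext
  apply LinearMap.ext
  intro (x : GrpRing p)
  show (augm p (cxd p (tpow p) 1 0 * x) : ℤ_[p]) = 0
  rw [show cxd p (tpow p) 1 0 = tt p from if_pos rfl, map_mul, augm_tt, zero_mul]

lemma resZpExact :
    (ShortComplex.mk ((cxZp p).d 1 0) (augLin p) (resZpW p)).Exact := by
  rw [ShortComplex.moduleCat_exact_iff]
  intro (x : GrpRing p) hx
  have hx0 : augm p x = 0 := hx
  obtain ⟨y, hy⟩ := Ideal.mem_span_singleton'.1 (mem_span_tt_of_augm_eq_zero p hx0)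
  refine ⟨y, ?_⟩
  show cxd p (tpow p) 1 0 * y = x
  rw [show cxd p (tpow p) 1 0 = tt p from if_pos rfl, mul_comm]
  exact hy

noncomputable def piZp : cxZp p ⟶ (ChainComplex.single₀ (ModuleCat (GrpRing p))).obj (ModuleCat.of (GrpRing p) (TrivZp p)) where
  f n := match n with
    | 0 => augLin p
    | _ + 1 => 0
  comm' i j hij := by
    simp only [ComplexShape.down_Rel] at hij
    subst hij
    match j with
    | 0 =>
        refine Eq.trans ?_ (resZpW p).symm
        exact Limits.comp_zero
    | n + 1 =>
        refine Eq.trans Limits.comp_zero ?_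
        exact Limits.comp_zero.symm

noncomputable def resZp : ProjectiveResolution (ModuleCat.of (GrpRing p) (TrivZp p)) where
  complex := cxZp p
  projective := fun _ => inferInstanceAs (Projective (Rm p))
  π := piZp p
  quasiIso := ⟨fun n => by
    cases n with
    | zero =>
        rw [ChainComplex.quasiIsoAt₀_iff, ShortComplex.quasiIso_iff_of_zeros']
        · exact ⟨resZpExact p, (ModuleCat.epi_iff_surjective (augLin p)).2 (augLin_surj p)⟩
        · exact (cxZp p).shape 0 0 (by simp)
        · rfl
        · rfl
    | succ n =>
        rw [quasiIsoAt_iff_exactAt']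
        · exact cx_exactAt p _ _ (tpow_exact p) n
        · apply ChainComplex.exactAt_succ_single_obj⟩



lemma tt_mul_mem_AugId (x : GrpRing p) : tt p * x ∈ AugId p := by
  rw [AugId, RingHom.mem_ker]
  show augm p (tt p * x) = 0
  rw [map_mul, augm_tt, zero_mul]

noncomputable def tLin : Rm p ⟶ ModuleCat.of (GrpRing p) ↥(AugId p) :=
  ModuleCat.ofHom (LinearMap.codRestrict (AugId p) (LinearMap.mulLeft (GrpRing p) (tt p))
    (tt_mul_mem_AugId p))

lemma tLin_apply (x : GrpRing p) : (show ↥(AugId p) from tLin p x).1 = tt p * x := rfl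

lemma tLin_surj : Function.Surjective (tLin p) := by
  rintro ⟨z, hz⟩
  rw [AugId, RingHom.mem_ker] at hz
  obtain ⟨y, hy⟩ := Ideal.mem_span_singleton'.1 (mem_span_tt_of_augm_eq_zero p hz)
  exact ⟨y, Subtype.ext (by rw [tLin_apply, mul_comm]; exact hy)⟩

lemma resAW : (cxA p).d 1 0 ≫ tLin p = 0 := by
  apply ModuleCat.hom_ext
  apply LinearMap.ext
  intro (x : GrpRing p)
  apply Subtype.ext
  show tt p * (cxd p (fun n => tpow p (n+1)) 1 0 * x) = 0
  rw [show cxd p (fun n => tpow p (n+1)) 1 0 = NN p from if_pos rfl,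
    ← mul_assoc, tt_mul_NN, zero_mul]

lemma resAExact :
    (ShortComplex.mk ((cxA p).d 1 0) (tLin p) (resAW p)).Exact := by
  rw [ShortComplex.moduleCat_exact_iff]
  intro (x : GrpRing p) hx
  have hx0 : tt p * x = 0 := congrArg Subtype.val hx
  obtain ⟨y, hy⟩ := exact_NN_tt p hx0
  refine ⟨y, ?_⟩
  show cxd p (fun n => tpow p (n+1)) 1 0 * y = x
  rw [show cxd p (fun n => tpow p (n+1)) 1 0 = NN p from if_pos rfl]
  exact hy

noncomputable def piA : cxA p ⟶ (ChainComplex.single₀ (ModuleCat (GrpRing p))).obj (ModuleCat.of (GrpRing p) ↥(AugId p)) where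
  f n := match n with
    | 0 => tLin p
    | _ + 1 => 0
  comm' i j hij := by
    simp only [ComplexShape.down_Rel] at hij
    subst hij
    match j with
    | 0 =>
        refine Eq.trans ?_ (resAW p).symm
        exact Limits.comp_zero
    | n + 1 =>
        refine Eq.trans Limits.comp_zero ?_
        exact Limits.comp_zero.symm

noncomputable def resA : ProjectiveResolution (ModuleCat.of (GrpRing p) ↥(AugId p)) where
  complex := cxA p
  projective := fun _ => inferInstanceAs (Projective (Rm p))
  π := piA p
  quasiIso := ⟨fun n => by
    cases n with
    | zero =>
        rw [ChainComplex.quasiIsoAt₀_iff, ShortComplex.quasiIso_iff_of_zeros']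
        · exact ⟨resAExact p, (ModuleCat.epi_iff_surjective (tLin p)).2 (tLin_surj p)⟩
        · exact (cxA p).shape 0 0 (by simp)
        · rfl
        · rfl
    | succ n =>
        rw [quasiIsoAt_iff_exactAt']
        · exact cx_exactAt p (fun n => tpow p (n + 1)) (fun n => tpow_succ_mul_tpow p (n + 1)) (fun n x h => tpow_exact p (n+1) x h) n
        · apply ChainComplex.exactAt_succ_single_obj⟩


section Part4
variable (i : ℕ)

def toZ (y : TrivZmod p i) : ZMod (p ^ i) := y
def ofZ (y : ZMod (p ^ i)) : TrivZmod p i := y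

lemma ofZ_inj {a b : ZMod (p ^ i)} (h : ofZ p i a = ofZ p i b) : a = b := h

noncomputable abbrev Ym : ModuleCat (GrpRing p) := ModuleCat.of (GrpRing p) (TrivZmod p i)

lemma smul_def (r : GrpRing p) (y : TrivZmod p i) :
    r • y = ofZ p i (PadicInt.toZModPow i (augm p r) * toZ p i y) := rfl

noncomputable def pLinMap : TrivZmod p i →ₗ[GrpRing p] TrivZmod p i where
  toFun y := ofZ p i ((p : ZMod (p ^ i)) * toZ p i y)
  map_add' a b := congrArg (ofZ p i) (mul_add (p : ZMod (p ^ i)) (toZ p i a) (toZ p i b))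
  map_smul' r y :=
    congrArg (ofZ p i) (mul_left_comm (p : ZMod (p ^ i)) (PadicInt.toZModPow i (augm p r)) (toZ p i y))

lemma pLinMap_apply (y : TrivZmod p i) :
    pLinMap p i y = ofZ p i ((p : ZMod (p ^ i)) * toZ p i y) := rfl

noncomputable def evEquiv : (Rm p ⟶ Ym p i) ≃ₗ[GrpRing p] TrivZmod p i where
  toFun f := f (1 : GrpRing p)
  map_add' f g := rfl
  map_smul' r f := rfl
  invFun y := ModuleCat.ofHom (LinearMap.toSpanSingleton (GrpRing p) (TrivZmod p i) y)
  left_inv f := ModuleCat.hom_ext <| LinearMap.ext fun (x : GrpRing p) => by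
    show x • f (1 : GrpRing p) = f x
    rw [← map_smul]
    congr 1
    show x • (1 : GrpRing p) = x
    rw [smul_eq_mul, mul_one]
  right_inv y := one_smul _ y

lemma ev_comp (a : GrpRing p) (f : Rm p ⟶ Ym p i) :
    f ((a * 1 : GrpRing p)) =
      ofZ p i (PadicInt.toZModPow i (augm p a) * toZ p i (f (1 : GrpRing p))) := by
  rw [← smul_def]
  exact map_smul f.hom a (1 : GrpRing p)

lemma toZModPow_tt : PadicInt.toZModPow i (augm p (tt p)) = 0 := by
  rw [augm_tt, map_zero]

lemma toZModPow_NN : PadicInt.toZModPow i (augm p (NN p)) = (p : ZMod (p ^ i)) := by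
  rw [augm_NN, map_natCast]

noncomputable def SZp : ShortComplex (ModuleCat (GrpRing p)) :=
  ShortComplex.mk (0 : Ym p i ⟶ Ym p i) (ModuleCat.ofHom (pLinMap p i)) Limits.zero_comp

noncomputable def SA : ShortComplex (ModuleCat (GrpRing p)) :=
  ShortComplex.mk (ModuleCat.ofHom (pLinMap p i)) (0 : Ym p i ⟶ Ym p i) Limits.comp_zero

noncomputable abbrev KZp := (cxZp p).linearYonedaObj (GrpRing p) (Ym p i)
noncomputable abbrev KA := (cxA p).linearYonedaObj (GrpRing p) (Ym p i)

noncomputable def isoSZp : (KZp p i).sc' 0 1 2 ≅ SZp p i :=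
  ShortComplex.isoMk (evEquiv p i).toModuleIso (evEquiv p i).toModuleIso
    (evEquiv p i).toModuleIso
    (by
      apply ModuleCat.hom_ext
      apply LinearMap.ext
      intro (f : Rm p ⟶ Ym p i)
      show (0 : Ym p i ⟶ Ym p i) (evEquiv p i f) = f ((cxd p (tpow p) 1 0 * 1 : GrpRing p))
      rw [show cxd p (tpow p) 1 0 = tt p from if_pos rfl, ev_comp, toZModPow_tt,
        zero_mul]
      rfl)
    (by
      apply ModuleCat.hom_ext
      apply LinearMap.ext
      intro (f : Rm p ⟶ Ym p i)
      show pLinMap p i (f (1 : GrpRing p)) = f ((cxd p (tpow p) 2 1 * 1 : GrpRing p))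
      rw [show cxd p (tpow p) 2 1 = NN p from if_pos rfl, ev_comp, toZModPow_NN,
        pLinMap_apply])

noncomputable def isoSA : (KA p i).sc' 0 1 2 ≅ SA p i :=
  ShortComplex.isoMk (evEquiv p i).toModuleIso (evEquiv p i).toModuleIso
    (evEquiv p i).toModuleIso
    (by
      apply ModuleCat.hom_ext
      apply LinearMap.ext
      intro (f : Rm p ⟶ Ym p i)
      show pLinMap p i (f (1 : GrpRing p)) =
        f ((cxd p (fun n => tpow p (n + 1)) 1 0 * 1 : GrpRing p))
      rw [show cxd p (fun n => tpow p (n + 1)) 1 0 = NN p from if_pos rfl, ev_comp,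
        toZModPow_NN, pLinMap_apply])
    (by
      apply ModuleCat.hom_ext
      apply LinearMap.ext
      intro (f : Rm p ⟶ Ym p i)
      show (0 : Ym p i ⟶ Ym p i) (evEquiv p i f) =
        f ((cxd p (fun n => tpow p (n + 1)) 2 1 * 1 : GrpRing p))
      rw [show cxd p (fun n => tpow p (n + 1)) 2 1 = tt p from if_pos rfl, ev_comp,
        toZModPow_tt, zero_mul]
      rfl)

lemma p_mul_pow_cast (hi : 1 ≤ i) :
    (p : ZMod (p ^ i)) * ((p ^ (i - 1) : ℕ) : ZMod (p ^ i)) = 0 := by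
  have h1 : (p : ℕ) * p ^ (i - 1) = p ^ i := by
    rw [← pow_succ', Nat.sub_add_cancel hi]
  rw [← Nat.cast_mul, h1, ZMod.natCast_self]

noncomputable def kerHomInt (hi : 1 ≤ i) : ℤ →+ ↥(LinearMap.ker (pLinMap p i)) where
  toFun n := ⟨ofZ p i ((n : ZMod (p ^ i)) * ((p ^ (i - 1) : ℕ) : ZMod (p ^ i))), by
    rw [LinearMap.mem_ker, pLinMap_apply]
    show ofZ p i ((p : ZMod (p ^ i)) * ((n : ZMod (p ^ i)) * _)) = ofZ p i 0
    rw [mul_left_comm, p_mul_pow_cast p i hi, mul_zero]⟩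
  map_zero' := by
    apply Subtype.ext
    show ofZ p i (((0 : ℤ) : ZMod (p ^ i)) * _) = ofZ p i 0
    push_cast
    rw [zero_mul]
  map_add' a b := by
    apply Subtype.ext
    show ofZ p i (((a + b : ℤ) : ZMod (p ^ i)) * _) =
      ofZ p i ((a : ZMod (p ^ i)) * _ + (b : ZMod (p ^ i)) * _)
    push_cast
    rw [add_mul]

lemma kerHomInt_p (hi : 1 ≤ i) : kerHomInt p i hi (p : ℤ) = 0 := by
  apply Subtype.ext
  show ofZ p i (((p : ℤ) : ZMod (p ^ i)) * ((p ^ (i - 1) : ℕ) : ZMod (p ^ i))) = ofZ p i 0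
  rw [Int.cast_natCast, p_mul_pow_cast p i hi]

noncomputable def kerLift (hi : 1 ≤ i) : ZMod p →+ ↥(LinearMap.ker (pLinMap p i)) :=
  ZMod.lift p ⟨kerHomInt p i hi, kerHomInt_p p i hi⟩

lemma ppow_pos : 0 < p ^ (i - 1) := Nat.pow_pos (Fact.out : p.Prime).pos

lemma kerLift_injective (hi : 1 ≤ i) : Function.Injective (kerLift p i hi) := by
  rw [injective_iff_map_eq_zero]
  intro a ha
  have hv : a = ((a.val : ℤ) : ZMod p) := by
    push_cast
    exact (ZMod.natCast_rightInverse a).symm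
  rw [hv] at ha ⊢
  rw [kerLift, ZMod.lift_coe] at ha
  have h2 : ((a.val : ℤ) : ZMod (p ^ i)) * ((p ^ (i - 1) : ℕ) : ZMod (p ^ i)) = 0 :=
    congrArg Subtype.val ha
  have h3 : (((a.val * p ^ (i - 1) : ℕ)) : ZMod (p ^ i)) = 0 := by
    push_cast
    push_cast at h2
    exact h2
  rw [ZMod.natCast_eq_zero_iff] at h3
  have h1 : (p : ℕ) * p ^ (i - 1) = p ^ i := by
    rw [← pow_succ', Nat.sub_add_cancel hi]
  rw [← h1] at h3
  have h4 : (p : ℕ) ∣ a.val := (Nat.mul_dvd_mul_iff_right (ppow_pos p i)).mp h3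
  have : ((a.val : ℕ) : ZMod p) = 0 := (ZMod.natCast_eq_zero_iff _ _).mpr h4
  push_cast
  push_cast at this
  exact this

lemma kerLift_surjective (hi : 1 ≤ i) : Function.Surjective (kerLift p i hi) := by
  rintro ⟨v, hv⟩
  rw [LinearMap.mem_ker, pLinMap_apply] at hv
  have hv' : (((p * (toZ p i v).val : ℕ)) : ZMod (p ^ i)) = 0 := by
    push_cast
    rw [ZMod.natCast_val, ZMod.cast_id]
    exact hv
  rw [ZMod.natCast_eq_zero_iff] at hv'
  have h1 : (p : ℕ) * p ^ (i - 1) = p ^ i := by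
    rw [← pow_succ', Nat.sub_add_cancel hi]
  have hv2 : p * p ^ (i - 1) ∣ p * (toZ p i v).val := by rw [h1]; exact hv'
  have h5 : p ^ (i - 1) ∣ (toZ p i v).val :=
    (Nat.mul_dvd_mul_iff_left (Fact.out : p.Prime).pos).mp hv2
  obtain ⟨m, hm⟩ := h5
  refine ⟨((m : ℤ) : ZMod p), ?_⟩
  rw [kerLift, ZMod.lift_coe]
  apply Subtype.ext
  show ofZ p i (((m : ℤ) : ZMod (p ^ i)) * ((p ^ (i - 1) : ℕ) : ZMod (p ^ i))) = v
  have : v = (((toZ p i v).val : ℕ) : ZMod (p ^ i)) := (ZMod.natCast_rightInverse _).symm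
  rw [this, hm]
  push_cast
  ring_nf
  rfl

noncomputable def kerEquiv (hi : 1 ≤ i) : ZMod p ≃+ ↥(LinearMap.ker (pLinMap p i)) :=
  AddEquiv.ofBijective (kerLift p i hi) ⟨kerLift_injective p i hi, kerLift_surjective p i hi⟩

noncomputable def extZpIso :
    (((Ext (GrpRing p) (ModuleCat (GrpRing p)) 1).obj
        (Opposite.op (ModuleCat.of (GrpRing p) (TrivZp p)))).obj (Ym p i)) ≅
      (SZp p i).homology :=
  (resZp p).isoExt 1 (Ym p i) ≪≫
    ShortComplex.homologyMapIso ((KZp p i).isoSc' 0 1 2 (by simp) (by simp)) ≪≫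
    ShortComplex.homologyMapIso (isoSZp p i)

noncomputable def extAIso :
    (((Ext (GrpRing p) (ModuleCat (GrpRing p)) 1).obj
        (Opposite.op (ModuleCat.of (GrpRing p) ↥(AugId p)))).obj (Ym p i)) ≅
      (SA p i).homology :=
  (resA p).isoExt 1 (Ym p i) ≪≫
    ShortComplex.homologyMapIso ((KA p i).isoSc' 0 1 2 (by simp) (by simp)) ≪≫
    ShortComplex.homologyMapIso (isoSA p i)

lemma rangeZpTriv : LinearMap.range (SZp p i).moduleCatToCycles = ⊥ := by
  rw [LinearMap.range_eq_bot]
  apply LinearMap.ext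
  intro x
  apply Subtype.ext
  show (SZp p i).f x = 0
  rfl

noncomputable def castRHom (hi : 1 ≤ i) : ZMod (p ^ i) →+* ZMod p :=
  ZMod.castHom (dvd_pow_self p (Nat.one_le_iff_ne_zero.mp hi)) (ZMod p)

noncomputable def quotA (hi : 1 ≤ i) :
    ((SA p i).moduleCatLeftHomologyData.H : Type) ≃+ ZMod p := by
  letI : Module (GrpRing p) (ZMod p) :=
    Module.compHom (ZMod p)
      ((castRHom p i hi).comp ((PadicInt.toZModPow i).comp (augm p).toRingHom))
  let castLin : TrivZmod p i →ₗ[GrpRing p] ZMod p :=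
    { toFun := fun y => castRHom p i hi (toZ p i y)
      map_add' := fun a b => map_add (castRHom p i hi) _ _
      map_smul' := fun r y => map_mul (castRHom p i hi) _ (toZ p i y) }
  let q : ↥(LinearMap.ker (SA p i).g.hom) →ₗ[GrpRing p] ZMod p :=
    castLin.comp (LinearMap.ker (SA p i).g.hom).subtype
  have hle : LinearMap.range (SA p i).moduleCatToCycles ≤ LinearMap.ker q := by
    rintro z ⟨x, rfl⟩
    rw [LinearMap.mem_ker]
    show castRHom p i hi (toZ p i ((SA p i).f x)) = 0
    show castRHom p i hi ((p : ZMod (p ^ i)) * toZ p i x) = 0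
    rw [map_mul, map_natCast, ZMod.natCast_self, zero_mul]
  let Q := Submodule.liftQ _ q hle
  have hsurj : Function.Surjective Q := by
    intro z
    have hz : z = castRHom p i hi ((z.val : ℕ) : ZMod (p ^ i)) := by
      rw [map_natCast]
      exact (ZMod.natCast_rightInverse z).symm
    refine ⟨Submodule.Quotient.mk ⟨ofZ p i ((z.val : ℕ) : ZMod (p ^ i)), ?_⟩, ?_⟩
    · apply LinearMap.mem_ker.mpr
      show (0 : Ym p i ⟶ Ym p i) _ = 0
      rfl
    · rw [Submodule.liftQ_apply]
      exact hz.symm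
  have hker : LinearMap.ker q ≤ LinearMap.range (SA p i).moduleCatToCycles := by
    rintro ⟨k, hk⟩ hq
    rw [LinearMap.mem_ker] at hq
    have hq' : ((toZ p i k).val : ZMod p) = 0 := by
      have h1 : toZ p i k = (((toZ p i k).val : ℕ) : ZMod (p ^ i)) :=
        (ZMod.natCast_rightInverse _).symm
      have h2 : castRHom p i hi (toZ p i k) = 0 := hq
      rw [h1, map_natCast] at h2
      exact h2
    rw [ZMod.natCast_eq_zero_iff] at hq'
    obtain ⟨m, hm⟩ := hq'
    refine ⟨ofZ p i ((m : ℕ) : ZMod (p ^ i)), ?_⟩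
    apply Subtype.ext
    show (SA p i).f _ = k
    show ofZ p i ((p : ZMod (p ^ i)) * toZ p i (ofZ p i ((m : ℕ) : ZMod (p ^ i)))) = k
    have h3 : k = (((toZ p i k).val : ℕ) : ZMod (p ^ i)) :=
      (ZMod.natCast_rightInverse _).symm
    rw [h3, hm]
    push_cast
    rfl
  have hinj : Function.Injective Q :=
    LinearMap.ker_eq_bot.mp (Submodule.ker_liftQ_eq_bot _ _ _ hker)
  exact (LinearEquiv.ofBijective Q ⟨hinj, hsurj⟩).toAddEquiv

end Part4
end Aux

open Aux in
theorem stmt_5 (p i : ℕ) [Fact p.Prime] (hp : Odd p) (hi : 1 ≤ i) :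
    Nonempty
      ((((Ext (GrpRing p) (ModuleCat (GrpRing p)) 1).obj
          (Opposite.op (ModuleCat.of (GrpRing p) (TrivZp p)))).obj
          (ModuleCat.of (GrpRing p) (TrivZmod p i)) : Type _) ≃+ ZMod p) ∧
    Nonempty
      ((((Ext (GrpRing p) (ModuleCat (GrpRing p)) 1).obj
          (Opposite.op (ModuleCat.of (GrpRing p) ↥(AugId p)))).obj
          (ModuleCat.of (GrpRing p) (TrivZmod p i)) : Type _) ≃+ ZMod p) := by
  constructor
  · exact ⟨((extZpIso p i ≪≫ (SZp p i).moduleCatHomologyIso).toLinearEquiv.toAddEquiv.trans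
      (Submodule.quotEquivOfEqBot _ (rangeZpTriv p i)).toAddEquiv).trans
      (kerEquiv p i hi).symm⟩
  · exact ⟨(extAIso p i ≪≫ (SA p i).moduleCatHomologyIso).toLinearEquiv.toAddEquiv.trans
      (quotA p i hi)⟩
end

section
/- Let p be an odd prime and G cyclic of order p with generator tau. Fix i >= 1, a in Z with a >= 1, and a nonzero Z_p-linear map u: Z_p^a -> F_p. Define M_u to be the Z_p-module (Z/p^i Z) x Z_p^a with tau acting by tau(t,x) = (t + u(x) p^{i-1}, x). Then the norm map on M_u is given by N(t,x) = (pt, px), hence H^0_hat(G, M_u) is isomorphic to F_p^a and H^1(G, M_u) = 0. -/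
/-!
STATEMENT 6: `p` odd prime, `G = ⟨τ⟩` cyclic of order `p`, `i ≥ 1`, `a ≥ 1`.
`M_u = ZMod (p^i) × (Fin a → ℤ_[p])` with `τ (t, x) = (t + u(x) p^{i-1}, x)`
for a nonzero `ℤ_p`-linear `u : ℤ_p^a → 𝔽_p`.  The data "`u(x) p^{i-1}`" is
encoded as an additive map `u' : (Fin a → ℤ_[p]) →+ ZMod (p^i)` whose image is
`p`-torsion (i.e. lands in `p^{i-1} · ZMod (p^i) ≅ 𝔽_p`); such maps
automatically factor `ℤ_p`-linearly through `ℤ_p^a ⊗ 𝔽_p`.  Conclusions: the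
norm `N = 1 + τ + ⋯ + τ^{p-1}` is `(t, x) ↦ (p t, p x)`; hence
`Ĥ⁰(G, M_u) = M^G / N(M) ≅ 𝔽_p^a` and `H¹(G, M_u) = ker N / (τ - 1) M = 0`.
-/

private lemma aux_pow_eq (p i : ℕ) (hi : 1 ≤ i) : p ^ i = p ^ (i-1) * p := by
  conv_lhs => rw [← Nat.sub_add_cancel hi]
  rw [pow_succ]

private lemma aux_tors (p i : ℕ) [Fact p.Prime] (hi : 1 ≤ i) {t : ZMod (p^i)}
    (ht : (p : ZMod (p^i)) * t = 0) : ∃ c : ℕ, t = ((p^(i-1) * c : ℕ) : ZMod (p^i)) := by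
  haveI : NeZero (p^i) := ⟨pow_ne_zero _ (Fact.out : p.Prime).ne_zero⟩
  have h1 : ((p * t.val : ℕ) : ZMod (p^i)) = 0 := by
    push_cast
    rw [ZMod.natCast_zmod_val]
    exact ht
  rw [ZMod.natCast_eq_zero_iff] at h1
  obtain ⟨k, hk⟩ := h1
  have h2 : t.val = p ^ (i-1) * k := by
    apply Nat.eq_of_mul_eq_mul_left (Fact.out : p.Prime).pos
    rw [hk, aux_pow_eq p i hi]
    ring
  exact ⟨k, by rw [← h2, ZMod.natCast_zmod_val]⟩

private lemma aux_congr (p i : ℕ) (hi : 1 ≤ i) {x y : ℕ} (h : (x : ZMod p) = (y : ZMod p)) :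
    ((p^(i-1) * x : ℕ) : ZMod (p^i)) = ((p^(i-1) * y : ℕ) : ZMod (p^i)) := by
  rw [ZMod.natCast_eq_natCast_iff] at h ⊢
  have h2 := h.mul_left' (c := p^(i-1))
  rwa [← aux_pow_eq p i hi] at h2

private lemma aux_exists_v (p i a : ℕ) [Fact p.Prime] (hi : 1 ≤ i)
    (u : (Fin a → ℤ_[p]) →+ ZMod (p ^ i))
    (hu_tors : ∀ x, p • u x = 0) (hu_ne : u ≠ 0) :
    ∃ v, u v = ((p^(i-1) : ℕ) : ZMod (p^i)) := by
  haveI : NeZero (p^i) := ⟨pow_ne_zero _ (Fact.out : p.Prime).ne_zero⟩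
  haveI : NeZero p := ⟨(Fact.out : p.Prime).ne_zero⟩
  obtain ⟨x0, hx0⟩ : ∃ x0, u x0 ≠ 0 := by
    by_contra h
    push_neg at h
    exact hu_ne (AddMonoidHom.ext fun x => by simp [h])
  have htors : (p : ZMod (p^i)) * u x0 = 0 := by
    rw [← nsmul_eq_mul]; exact hu_tors x0
  obtain ⟨d, hd⟩ := aux_tors p i hi htors
  have hpd : ¬ (p ∣ d) := by
    intro ⟨e, he⟩
    apply hx0
    rw [hd, he, ZMod.natCast_eq_zero_iff]
    exact ⟨e, by rw [aux_pow_eq p i hi]; ring⟩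
  have hdz : (d : ZMod p) ≠ 0 := by
    rwa [Ne, ZMod.natCast_eq_zero_iff]
  set e := ((d : ZMod p)⁻¹).val with he
  have hde : ((d * e : ℕ) : ZMod p) = ((1 : ℕ) : ZMod p) := by
    push_cast
    rw [he, ZMod.natCast_zmod_val]
    exact mul_inv_cancel₀ hdz
  refine ⟨e • x0, ?_⟩
  rw [map_nsmul, hd, nsmul_eq_mul]
  have : (e : ZMod (p^i)) * ((p^(i-1) * d : ℕ) : ZMod (p^i)) = ((p^(i-1) * (d * e) : ℕ) : ZMod (p^i)) := by
    push_cast; ring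
  rw [this, aux_congr p i hi hde, mul_one]

theorem stmt_6 (p i a : ℕ) [Fact p.Prime] (hp : Odd p) (hi : 1 ≤ i) (ha : 1 ≤ a)
    (u : (Fin a → ℤ_[p]) →+ ZMod (p ^ i))
    (hu_tors : ∀ x, p • u x = 0) (hu_ne : u ≠ 0)
    (τ : AddMonoid.End (ZMod (p ^ i) × (Fin a → ℤ_[p])))
    (hτ : ∀ m, τ m = (m.1 + u m.2, m.2))
    (N : AddMonoid.End (ZMod (p ^ i) × (Fin a → ℤ_[p])))
    (hN : N = ∑ j ∈ Finset.range p, τ ^ j) :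
    -- the norm is multiplication by p in both coordinates
    (∀ m : ZMod (p ^ i) × (Fin a → ℤ_[p]),
        N m = ((p : ZMod (p ^ i)) * m.1, fun k => (p : ℤ_[p]) * m.2 k)) ∧
    -- Ĥ⁰(G, M_u) = M^G / N(M) ≅ 𝔽_p^a
    Nonempty
      ((↥(AddMonoidHom.ker (τ - 1)) ⧸
          ((AddMonoidHom.range (N : _ →+ _)).addSubgroupOf
            (AddMonoidHom.ker (τ - 1)))) ≃+ (Fin a → ZMod p)) ∧
    -- H¹(G, M_u) = ker N / (τ - 1) M = 0
    Subsingleton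
      (↥(AddMonoidHom.ker (N : _ →+ _)) ⧸
        ((AddMonoidHom.range (τ - 1)).addSubgroupOf
          (AddMonoidHom.ker (N : _ →+ _)))) := by
  haveI : NeZero (p^i) := ⟨pow_ne_zero _ (Fact.out : p.Prime).ne_zero⟩
  haveI : NeZero p := ⟨(Fact.out : p.Prime).ne_zero⟩
  -- powers of τ
  have hτpow : ∀ (j : ℕ) (m : ZMod (p ^ i) × (Fin a → ℤ_[p])),
      (τ ^ j) m = (m.1 + j • u m.2, m.2) := by
    intro j
    induction j with
    | zero => intro m; simp [AddMonoid.End.one_apply]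
    | succ j ih =>
      intro m
      have h1 : (τ ^ (j+1)) m = (τ ^ j) (τ m) := by rw [pow_succ]; rfl
      rw [h1, ih, hτ]
      simp only
      rw [succ_nsmul, Prod.mk.injEq]
      exact ⟨by abel, rfl⟩
  -- the norm formula
  have hNapp : ∀ m : ZMod (p ^ i) × (Fin a → ℤ_[p]),
      N m = ((p : ZMod (p ^ i)) * m.1, fun k => (p : ℤ_[p]) * m.2 k) := by
    intro m
    obtain ⟨k, hk⟩ := hp
    have hsum : ∑ j ∈ Finset.range p, j = p * k := by
      have h2 := Finset.sum_range_id_mul_two p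
      apply Nat.eq_of_mul_eq_mul_right (show 0 < 2 by norm_num)
      rw [h2]
      have h3 : p - 1 = 2 * k := by omega
      rw [h3]
      ring
    have happ : N m = ∑ j ∈ Finset.range p, (τ ^ j) m := by
      rw [hN]; exact AddMonoidHom.finset_sum_apply _ _ m
    rw [happ]
    simp_rw [hτpow]
    ext1
    · rw [Prod.fst_sum]
      simp only
      rw [Finset.sum_add_distrib, Finset.sum_const, Finset.card_range,
        ← Finset.sum_smul, hsum, mul_comm p k, mul_smul, hu_tors, smul_zero, add_zero,
        nsmul_eq_mul]
    · rw [Prod.snd_sum]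
      simp only [Finset.sum_const, Finset.card_range]
      funext j
      simp [nsmul_eq_mul]
  -- the action of τ - 1
  have hτ1 : ∀ m : ZMod (p ^ i) × (Fin a → ℤ_[p]), (τ - 1) m = (u m.2, 0) := by
    intro m
    have hsub : (τ - 1) m = τ m - m := rfl
    rw [hsub, hτ]
    exact Prod.ext (by simp) (by simp)
  obtain ⟨v, hv⟩ := aux_exists_v p i a hi u hu_tors hu_ne
  -- membership in ker (τ - 1)
  have hker1 : ∀ m : ZMod (p ^ i) × (Fin a → ℤ_[p]),
      m ∈ AddMonoidHom.ker ((τ - 1 : AddMonoid.End _) : _ →+ _) ↔ u m.2 = 0 := by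
    intro m
    change (τ - 1) m = 0 ↔ _
    rw [hτ1]
    constructor
    · intro h
      exact congrArg Prod.fst h
    · intro h
      rw [h]
      rfl
  refine ⟨hNapp, ?_, ?_⟩
  · -- H⁰ ≅ 𝔽_p^a
    set π : ZMod (p^i) →+* ZMod p := ZMod.castHom (dvd_pow_self p (by omega)) (ZMod p) with hπ
    set ρ : ℤ_[p] →+* ZMod p := PadicInt.toZMod with hρ
    have hρnat : ∀ n : ℕ, ρ ((n : ℤ_[p])) = (n : ZMod p) := fun n => map_natCast ρ n
    set Φ : (ZMod (p ^ i) × (Fin a → ℤ_[p])) →+ (Fin a → ZMod p) :=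
      { toFun := fun m => fun k => ρ (m.2 k) + π m.1 * ρ (v k)
        map_zero' := by funext k; simp
        map_add' := by
          intro m n
          funext k
          simp only [Prod.snd_add, Pi.add_apply, map_add, Prod.fst_add]
          ring } with hΦ
    set Φ' := Φ.comp (AddMonoidHom.ker ((τ - 1 : AddMonoid.End _) : _ →+ _)).subtype with hΦ'
    have hΦapp : ∀ m : ↥(AddMonoidHom.ker ((τ - 1 : AddMonoid.End _) : _ →+ _)),
        Φ' m = fun k => ρ ((m : ZMod (p ^ i) × (Fin a → ℤ_[p])).2 k) +
          π (m : ZMod (p ^ i) × (Fin a → ℤ_[p])).1 * ρ (v k) := fun m => rfl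
    have hsurj : Function.Surjective Φ' := by
      intro w
      set x' : Fin a → ℤ_[p] := fun k => ((w k).val : ℤ_[p]) with hx'
      have htor : (p : ZMod (p^i)) * u x' = 0 := by rw [← nsmul_eq_mul]; exact hu_tors x'
      obtain ⟨c, hc⟩ := aux_tors p i hi htor
      have humem : u (x' - c • v) = 0 := by
        rw [map_sub, map_nsmul, hv, hc, nsmul_eq_mul]
        push_cast
        ring
      refine ⟨⟨((c : ZMod (p^i)), x' - c • v), (hker1 _).mpr humem⟩, ?_⟩
      rw [hΦapp]
      funext k
      simp only [Pi.sub_apply, Pi.smul_apply, map_sub]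
      have h1 : ρ (x' k) = w k := by rw [hx', hρnat, ZMod.natCast_zmod_val]
      have h2 : π ((c : ZMod (p^i))) = (c : ZMod p) := map_natCast π c
      have h3 : ρ (c • v k) = (c : ZMod p) * ρ (v k) := by
        rw [map_nsmul, nsmul_eq_mul]
      rw [h1, h2, h3]
      ring
    have hkerΦ : (AddMonoidHom.range ((N : AddMonoid.End _) : _ →+ _)).addSubgroupOf
        (AddMonoidHom.ker ((τ - 1 : AddMonoid.End _) : _ →+ _)) = AddMonoidHom.ker Φ' := by
      ext m
      rw [AddSubgroup.mem_addSubgroupOf, AddMonoidHom.mem_ker]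
      change (∃ n, N n = (m : ZMod (p ^ i) × (Fin a → ℤ_[p]))) ↔ _
      obtain ⟨m, hm⟩ := m
      constructor
      · rintro ⟨n, hn⟩
        rw [hNapp] at hn
        rw [hΦapp]
        funext k
        have hm1 : m.1 = (p : ZMod (p^i)) * n.1 := (congrArg Prod.fst hn).symm
        have hm2 : m.2 k = (p : ℤ_[p]) * n.2 k := (congrFun (congrArg Prod.snd hn) k).symm
        simp only
        rw [hm1, hm2, map_mul, map_mul]
        have hρp : ρ ((p : ℤ_[p])) = 0 := by rw [hρnat]; exact ZMod.natCast_self p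
        have hπp : π ((p : ZMod (p^i))) = 0 := by
          rw [map_natCast]
          exact ZMod.natCast_self p
        rw [hρp, hπp]
        simp
      · intro h
        rw [hΦapp] at h
        have h' : ∀ k, ρ (m.2 k) + π m.1 * ρ (v k) = 0 := fun k => congrFun h k
        have hum : u m.2 = 0 := (hker1 m).mp hm
        set c : ℕ := m.1.val with hcdef
        have hm1 : m.1 = (c : ZMod (p^i)) := (ZMod.natCast_zmod_val m.1).symm
        have hπm : π m.1 = (c : ZMod p) := by
          conv_lhs => rw [hm1]
          exact map_natCast π c
        -- divide m.2 k + c • v k by p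
        have hdvd : ∀ k, (p : ℤ_[p]) ∣ (m.2 k + c • v k) := by
          intro k
          have hρ0 : ρ (m.2 k + c • v k) = 0 := by
            rw [map_add, map_nsmul, nsmul_eq_mul, ← hπm]
            exact h' k
          have : (m.2 k + c • v k) ∈ RingHom.ker ρ := hρ0
          rw [hρ, PadicInt.ker_toZMod, PadicInt.maximalIdeal_eq_span_p,
            Ideal.mem_span_singleton] at this
          exact this
        choose y hy using hdvd
        have hsum2 : u (fun k => m.2 k + c • v k) = ((p^(i-1) * c : ℕ) : ZMod (p^i)) := by
          have : (fun k => m.2 k + c • v k) = m.2 + c • v := by funext k; simp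
          rw [this, map_add, map_nsmul, hum, hv, zero_add, nsmul_eq_mul]
          push_cast
          ring
        have hsum3 : u (fun k => m.2 k + c • v k) = 0 := by
          have heq : (fun k => m.2 k + c • v k) = p • y := by
            funext k
            rw [hy k, Pi.smul_apply, nsmul_eq_mul]
          rw [heq, map_nsmul]
          exact hu_tors y
        have hdc : p ∣ c := by
          have h0 : ((p^(i-1) * c : ℕ) : ZMod (p^i)) = 0 := by rw [← hsum2, hsum3]
          rw [ZMod.natCast_eq_zero_iff] at h0
          have h0' : p ^ (i-1) * p ∣ p ^ (i-1) * c := by rw [← aux_pow_eq p i hi]; exact h0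
          exact (Nat.mul_dvd_mul_iff_left (pow_pos (Fact.out : p.Prime).pos _)).mp h0'
        obtain ⟨c', hc'⟩ := hdc
        -- each coordinate of m.2 is divisible by p
        have hπ0 : π m.1 = 0 := by
          rw [hπm, hc']
          push_cast
          simp [ZMod.natCast_self]
        have hdvd2 : ∀ k, (p : ℤ_[p]) ∣ m.2 k := by
          intro k
          have hρ0 : ρ (m.2 k) = 0 := by
            have := h' k
            rw [hπ0, zero_mul, add_zero] at this
            exact this
          have : m.2 k ∈ RingHom.ker ρ := hρ0
          rw [hρ, PadicInt.ker_toZMod, PadicInt.maximalIdeal_eq_span_p,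
            Ideal.mem_span_singleton] at this
          exact this
        choose y' hy' using hdvd2
        refine ⟨((c' : ZMod (p^i)), y'), ?_⟩
        rw [hNapp]
        have h1 : (p : ZMod (p^i)) * (c' : ZMod (p^i)) = m.1 := by
          rw [hm1, hc']
          push_cast
          ring
        have h2 : (fun k => (p : ℤ_[p]) * y' k) = m.2 := by
          funext k
          exact (hy' k).symm
        exact Prod.ext h1 h2
    exact ⟨(QuotientAddGroup.quotientAddEquivOfEq hkerΦ).trans
      (QuotientAddGroup.quotientKerEquivOfSurjective Φ' hsurj)⟩
  · -- H¹ = 0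
    have htop : (AddMonoidHom.range ((τ - 1 : AddMonoid.End _) : _ →+ _)).addSubgroupOf
        (AddMonoidHom.ker ((N : AddMonoid.End _) : _ →+ _)) = ⊤ := by
      rw [AddSubgroup.eq_top_iff']
      rintro ⟨m, hm⟩
      rw [AddSubgroup.mem_addSubgroupOf]
      change N m = 0 at hm
      rw [hNapp] at hm
      have h1 : (p : ZMod (p^i)) * m.1 = 0 := congrArg Prod.fst hm
      have h2 : ∀ kk, (p : ℤ_[p]) * m.2 kk = 0 := fun kk => congrFun (congrArg Prod.snd hm) kk
      have hpne : (p : ℤ_[p]) ≠ 0 := by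
        exact_mod_cast (Fact.out : p.Prime).ne_zero
      have hx : m.2 = 0 := by
        funext kk
        exact (mul_eq_zero.mp (h2 kk)).resolve_left hpne
      obtain ⟨c, hc⟩ := aux_tors p i hi h1
      refine ⟨(0, c • v), ?_⟩
      change (τ - 1) (0, c • v) = m
      rw [hτ1]
      have hu1 : u ((0, c • v).2) = m.1 := by
        show u (c • v) = m.1
        rw [map_nsmul, hv, hc, nsmul_eq_mul]
        push_cast
        ring
      exact Prod.ext hu1 (by rw [hx])
    erw [htop]
    exact QuotientAddGroup.subsingleton_quotient_top
end

section
/- Let G be a finite group, X a G-module, and I a normal subgroup of G. Then there is an exact sequence H^{-1}_hat(G,X) -> H^{-1}_hat(G/I, X^I) -> H^0_hat(I,X)_{G/I} -> H^0_hat(G,X) -> H^0_hat(G/I, X^I) -> 0, where the subscript G/I denotes coinvariants. In particular, if X^I is cohomologically trivial as a G/I-module, then H^0_hat(G,X) is isomorphic to the G/I-coinvariants of H^0_hat(I,X). -/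
/-!
STATEMENT 9: Let `G` be a finite group, `X` a `G`-module and `I ⊴ G`.
There is an exact sequence
`Ĥ⁻¹(G,X) → Ĥ⁻¹(G/I, X^I) → Ĥ⁰(I,X)_{G/I} → Ĥ⁰(G,X) → Ĥ⁰(G/I, X^I) → 0`.
All five groups are subquotients of `X`:
* `Ĥ⁻¹(G,X) = ker N_G / I_G X`,
* `Ĥ⁻¹(G/I,X^I) = (X^I ∩ ker N_{G/I}) / I_{G/I} X^I`,
* `Ĥ⁰(I,X)_{G/I} = X^I / (N_I X + I_{G/I} X^I)`,
* `Ĥ⁰(G,X) = X^G / N_G X`,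
* `Ĥ⁰(G/I,X^I) = X^G / N_{G/I}(X^I)`,
with maps induced respectively by `N_I`, the identity, `N_{G/I}` and the
identity; exactness is expressed elementwise.  Here `N_{G/I} x = ∑ q, q.out • x`
(independent of the coset representatives on `X^I`), and `I_{G/I} X^I` is the
subgroup generated by `g • z - z` for `z ∈ X^I`.  In particular, if `X^I` is
cohomologically trivial as a `G/I`-module (here: `Ĥ⁻¹(G/I,X^I) = 0` and
`Ĥ⁰(G/I,X^I) = 0`, the degrees that intervene), then
`Ĥ⁰(G,X) ≅ Ĥ⁰(I,X)_{G/I}` via `N_{G/I}`.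
-/

section
variable {G : Type} [Group G] [Fintype G] {X : Type} [AddCommGroup X]
  [DistribMulAction G X] (I : Subgroup G) [I.Normal] [Fintype ↥I] [Fintype (G ⧸ I)]

lemma aux_coset_smul {x : X} (hx : ∀ h ∈ I, h • x = x) {a b : G}
    (hab : (a : G ⧸ I) = b) : a • x = b • x := by
  rw [eq_comm, QuotientGroup.eq] at hab
  calc a • x = b • ((b⁻¹ * a) • x) := by rw [← mul_smul, mul_inv_cancel_left]
    _ = b • x := by rw [hx _ hab]

lemma aux_NI_inv (x : X) (h : G) (hh : h ∈ I) :
    h • (∑ g : ↥I, (g : G) • x) = ∑ g : ↥I, (g : G) • x := by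
  rw [Finset.smul_sum]
  exact Fintype.sum_equiv (Equiv.mulLeft (⟨h, hh⟩ : ↥I)) _ _
    (fun g => by simp [mul_smul])

lemma aux_norm_factor (x : X) :
    ∑ g : G, g • x = ∑ q : G ⧸ I, q.out • (∑ h : ↥I, (h : G) • x) := by
  have h1 : ∀ q : G ⧸ I, q.out • (∑ h : ↥I, (h : G) • x)
      = ∑ h : ↥I, (q.out * (h : G)) • x := by
    intro q; rw [Finset.smul_sum]; simp [mul_smul]
  simp_rw [h1]
  rw [← Fintype.sum_prod_type (f := fun p : (G ⧸ I) × ↥I => (p.1.out * (p.2 : G)) • x)]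
  refine (Fintype.sum_bijective (fun p : (G ⧸ I) × ↥I => p.1.out * (p.2 : G))
    ⟨?_, ?_⟩ _ _ (fun p => rfl)).symm
  · rintro ⟨q, h⟩ ⟨q', h'⟩ e
    simp only at e
    have hq : q = q' := by
      have := congrArg (QuotientGroup.mk (s := I)) e
      rwa [QuotientGroup.mk_mul_of_mem _ h.2, QuotientGroup.mk_mul_of_mem _ h'.2,
        QuotientGroup.out_eq', QuotientGroup.out_eq'] at this
    subst hq
    have : (h : G) = h' := by exact mul_left_cancel e
    simp [Prod.ext_iff, Subtype.ext this]
  · intro g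
    refine ⟨⟨(g : G ⧸ I), ⟨((g : G ⧸ I) : G ⧸ I).out⁻¹ * g, ?_⟩⟩, ?_⟩
    · rw [← QuotientGroup.eq, QuotientGroup.out_eq']
    · simp

lemma aux_NgQ_Ginv {x : X} (hx : ∀ h ∈ I, h • x = x) (g : G) :
    g • (∑ q : G ⧸ I, q.out • x) = ∑ q : G ⧸ I, q.out • x := by
  rw [Finset.smul_sum]
  refine Fintype.sum_equiv (Equiv.mulLeft (g : G ⧸ I)) _ _ (fun q => ?_)
  rw [← mul_smul]
  refine aux_coset_smul I hx ?_
  simp [QuotientGroup.out_eq']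

lemma aux_NgQ_gsmul {z : X} (hz : ∀ h ∈ I, h • z = z) (g : G) :
    ∑ q : G ⧸ I, q.out • (g • z) = ∑ q : G ⧸ I, q.out • z := by
  refine Fintype.sum_equiv (Equiv.mulRight (g : G ⧸ I)) _ _ (fun q => ?_)
  rw [← mul_smul]
  refine aux_coset_smul I hz ?_
  simp [QuotientGroup.out_eq']

lemma aux_NgQ_aug {a : X}
    (ha : a ∈ AddSubgroup.closure
      {y | ∃ (g : G) (z : X), (∀ h ∈ I, h • z = z) ∧ y = g • z - z}) :
    ∑ q : G ⧸ I, q.out • a = 0 := by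
  induction ha using AddSubgroup.closure_induction with
  | mem y hy =>
    obtain ⟨g, z, hz, rfl⟩ := hy
    simp_rw [smul_sub, Finset.sum_sub_distrib]
    rw [aux_NgQ_gsmul I hz g, sub_self]
  | zero => simp
  | add x y _ _ hx hy => simp_rw [smul_add, Finset.sum_add_distrib, hx, hy, add_zero]
  | neg x _ hx => simp_rw [smul_neg, Finset.sum_neg_distrib, hx, neg_zero]

end

theorem stmt_9 (G : Type) [Group G] [Fintype G]
    (X : Type) [AddCommGroup X] [DistribMulAction G X]
    (I : Subgroup G) [I.Normal] [Fintype ↥I] [Fintype (G ⧸ I)]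
    (Ng NI NgQ : X →+ X)
    (hNg : Ng = ∑ g : G, DistribMulAction.toAddMonoidHom X g)
    (hNI : NI = ∑ g : ↥I, DistribMulAction.toAddMonoidHom X (g : G))
    (hNgQ : NgQ = ∑ q : G ⧸ I, DistribMulAction.toAddMonoidHom X q.out)
    (augQ : AddSubgroup X)
    (haugQ : augQ = AddSubgroup.closure
      {y | ∃ (g : G) (z : X), (∀ h ∈ I, h • z = z) ∧ y = g • z - z}) :
    -- the map Ĥ⁻¹(G,X) → Ĥ⁻¹(G/I, X^I) induced by N_I is well defined
    (∀ x : X, Ng x = 0 → (∀ h ∈ I, h • NI x = NI x) ∧ NgQ (NI x) = 0) ∧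
    -- exactness at Ĥ⁻¹(G/I, X^I)
    (∀ x : X, (∀ h ∈ I, h • x = x) → NgQ x = 0 →
      ((x ∈ NI.range ⊔ augQ) ↔ ∃ y : X, Ng y = 0 ∧ x - NI y ∈ augQ)) ∧
    -- the map Ĥ⁰(I,X)_{G/I} → Ĥ⁰(G,X) induced by N_{G/I} is well defined
    (∀ x : X, (∀ h ∈ I, h • x = x) → ∀ g : G, g • NgQ x = NgQ x) ∧
    -- exactness at Ĥ⁰(I,X)_{G/I}
    (∀ x : X, (∀ h ∈ I, h • x = x) →
      ((NgQ x ∈ Ng.range) ↔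
        ∃ y : X, (∀ h ∈ I, h • y = y) ∧ NgQ y = 0 ∧ x - y ∈ NI.range ⊔ augQ)) ∧
    -- exactness at Ĥ⁰(G,X)
    (∀ x : X, (∀ g : G, g • x = x) →
      ((∃ z : X, (∀ h ∈ I, h • z = z) ∧ x = NgQ z) ↔
        ∃ y : X, (∀ h ∈ I, h • y = y) ∧ x - NgQ y ∈ Ng.range)) ∧
    -- surjectivity onto Ĥ⁰(G/I, X^I)
    (∀ x : X, (∀ g : G, g • x = x) →
      ∃ y : X, (∀ g : G, g • y = y) ∧
        ∃ z : X, (∀ h ∈ I, h • z = z) ∧ x - y = NgQ z) ∧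
    -- in particular: if X^I is cohomologically trivial over G/I (in the
    -- relevant degrees), Ĥ⁰(G,X) ≅ Ĥ⁰(I,X)_{G/I} via N_{G/I}
    (((∀ x : X, (∀ h ∈ I, h • x = x) → NgQ x = 0 → x ∈ augQ) ∧
      (∀ x : X, (∀ g : G, g • x = x) → ∃ z : X, (∀ h ∈ I, h • z = z) ∧ x = NgQ z)) →
      ((∀ x : X, (∀ g : G, g • x = x) →
          ∃ y : X, (∀ h ∈ I, h • y = y) ∧ x - NgQ y ∈ Ng.range) ∧
       (∀ y : X, (∀ h ∈ I, h • y = y) → NgQ y ∈ Ng.range →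
          y ∈ NI.range ⊔ augQ))) := by
  have hNg' : ∀ x : X, Ng x = ∑ g : G, g • x := by
    intro x; rw [hNg, AddMonoidHom.finset_sum_apply]; rfl
  have hNI' : ∀ x : X, NI x = ∑ g : ↥I, (g : G) • x := by
    intro x; rw [hNI, AddMonoidHom.finset_sum_apply]; rfl
  have hNgQ' : ∀ x : X, NgQ x = ∑ q : G ⧸ I, q.out • x := by
    intro x; rw [hNgQ, AddMonoidHom.finset_sum_apply]; rfl
  have hfac : ∀ x : X, Ng x = NgQ (NI x) := by
    intro x; rw [hNg', hNgQ', hNI']; exact aux_norm_factor I x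
  have hInv : ∀ (x : X), ∀ h ∈ I, h • NI x = NI x := by
    intro x h hh; rw [hNI']; exact aux_NI_inv I x h hh
  have hGinv : ∀ (x : X), (∀ h ∈ I, h • x = x) → ∀ g : G, g • NgQ x = NgQ x := by
    intro x hx g; rw [hNgQ']; exact aux_NgQ_Ginv I hx g
  have haug0 : ∀ a ∈ augQ, NgQ a = 0 := by
    intro a ha; rw [hNgQ']; exact aux_NgQ_aug I (haugQ ▸ ha)
  refine ⟨?_, ?_, fun x hx g => hGinv x hx g, ?_, ?_, ?_, ?_⟩
  · intro x hx
    exact ⟨hInv x, by rw [← hfac, hx]⟩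
  · intro x hx hx0
    constructor
    · intro hmem
      obtain ⟨u, ⟨y, rfl⟩, a, ha, hsum⟩ := AddSubgroup.mem_sup.mp hmem
      refine ⟨y, ?_, ?_⟩
      · have : NI y = x - a := by rw [← hsum]; abel
        rw [hfac, this, map_sub, hx0, haug0 a ha, sub_zero]
      · have : x - NI y = a := by rw [← hsum]; abel
        rwa [this]
    · rintro ⟨y, _, ha⟩
      exact AddSubgroup.mem_sup.mpr ⟨NI y, ⟨y, rfl⟩, x - NI y, ha, by abel⟩
  · intro x hx
    constructor
    · rintro ⟨w, hw⟩
      refine ⟨x - NI w, ?_, ?_, ?_⟩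
      · intro h hh; rw [smul_sub, hx h hh, hInv w h hh]
      · rw [map_sub, ← hfac, hw, sub_self]
      · exact AddSubgroup.mem_sup.mpr ⟨NI w, ⟨w, rfl⟩, 0, zero_mem _, by abel⟩
    · rintro ⟨y, _, hy0, hsub⟩
      obtain ⟨u, ⟨w, rfl⟩, a, ha, hsum⟩ := AddSubgroup.mem_sup.mp hsub
      refine ⟨w, ?_⟩
      have : x = y + (NI w + a) := by rw [hsum]; abel
      rw [hfac w, this, map_add, map_add, hy0, haug0 a ha, zero_add, add_zero]
  · intro x _
    constructor
    · rintro ⟨z, hz, rfl⟩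
      exact ⟨z, hz, by rw [sub_self]; exact zero_mem _⟩
    · rintro ⟨y, hy, w, hw⟩
      refine ⟨y + NI w, fun h hh => by rw [smul_add, hy h hh, hInv w h hh], ?_⟩
      rw [map_add, ← hfac, hw]; abel
  · intro x hx
    have hxI : ∀ h ∈ I, h • x = x := fun h _ => hx h
    exact ⟨x - NgQ x, fun g => by rw [smul_sub, hx g, hGinv x hxI g], x, hxI,
      by abel⟩
  · rintro ⟨H1, H2⟩
    constructor
    · intro x hx
      obtain ⟨z, hz, hxz⟩ := H2 x hx
      exact ⟨z, hz, by rw [hxz, sub_self]; exact zero_mem _⟩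
    · intro y hy hrange
      obtain ⟨w, hw⟩ := hrange
      have haI : ∀ h ∈ I, h • (y - NI w) = y - NI w := fun h hh => by
        rw [smul_sub, hy h hh, hInv w h hh]
      have ha0 : NgQ (y - NI w) = 0 := by rw [map_sub, ← hfac, hw, sub_self]
      exact AddSubgroup.mem_sup.mpr
        ⟨NI w, ⟨w, rfl⟩, y - NI w, H1 _ haI ha0, by abel⟩
end

section
/- Let p be an odd prime, m a divisor of p-1, and G the metacyclic group of order pm with presentation <tau, sigma | tau^p = sigma^m = 1, sigma tau sigma^{-1} = tau^r> where r has multiplicative order m modulo p. For 0 <= i < m, let A{i} be the Z_p[G]-lattice Z_p[zeta] (zeta a primitive p-th root of unity) with tau acting by multiplication by zeta twisted so that sigma acts by zeta^j -> xi^i zeta^{rj}, where xi in Z_p is the primitive m-th root of unity congruent to r mod p. Then for each 0 <= i < m there is a short exact sequence of Z_p[G]-modules 0 -> A{i+1} -> A{i} -> F_p{i} -> 0, where F_p{i} is the 1-dimensional F_p-module on which tau acts trivially and sigma acts by multiplication by xi^i mod p. -/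
/-!
STATEMENT 10: `p` odd prime, `m ∣ p - 1`, `G` metacyclic of order `pm` with
`σ τ σ⁻¹ = τ^r`, `r` of order `m` mod `p`.  Working in the ring
`R = ℤ_p[ζ]` (axiomatised as a discrete valuation ring containing a primitive
`p`-th root of unity `ζ` with residue field of cardinality `p`, with the
ring endomorphism `σ` fixing `ξ` and sending `ζ ↦ ζ^r`), let
`w = ∑_{j<m} ξ^{-j} ζ^{r^j}`.  The module `A{i}` is `R` with `τ` acting by
multiplication by `ζ` and `σ` acting by `x ↦ ξ^i σ(x)`.  Then multiplication
by `w` gives a short exact sequence of `ℤ_p[G]`-modules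
`0 → A{i+1} → A{i} → 𝔽_p{i} → 0`:
* `σ w = ξ w` (so `x ↦ w x` is `G`-equivariant from `A{i+1}` to `A{i}`),
* `x ↦ w x` is injective and `Function.Exact` against the quotient map,
* the quotient `R/(w)` has `p` elements,
* `τ` acts trivially on the quotient (`ζ x ≡ x mod (w)`), and `σ` acts on it
  by multiplication by `ξ^i` (`ξ^i σ(x) ≡ ξ^i x mod (w)`).
-/

open Finset

private lemma binom_aux {R : Type} [CommRing R] (π : R) :
    ∀ n : ℕ, ∃ c : R, (1 + π) ^ n = 1 + (n : R) * π + π ^ 2 * c := by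
  intro n
  induction n with
  | zero => exact ⟨0, by norm_num⟩
  | succ n ih =>
    obtain ⟨c, hc⟩ := ih
    exact ⟨c + n + c * π, by rw [pow_succ, hc]; push_cast; ring⟩

theorem stmt_10 (p m r i : ℕ) [Fact p.Prime] (hp : Odd p)
    (hm : m ∣ p - 1) (hm1 : 1 < m) (hr : orderOf (r : ZMod p) = m)
    (R : Type) [CommRing R] [IsDomain R] [IsDiscreteValuationRing R]
    (ζ : R) (hζ : IsPrimitiveRoot ζ p) (hζnu : ¬ IsUnit (ζ - 1))
    (hcard : Nat.card (R ⧸ Ideal.span {ζ - 1}) = p)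
    (ξ : Rˣ) (hξ : IsPrimitiveRoot (ξ : R) m)
    (hξr : (p : R) ∣ (ξ : R) - (r : R)) (hmu : IsUnit (m : R))
    (σ : R →+* R) (hσζ : σ ζ = ζ ^ r) (hσξ : σ (ξ : R) = ξ)
    (w : R) (hw : w = ∑ j ∈ Finset.range m, ((ξ ^ (-(j : ℤ)) : Rˣ) : R) * ζ ^ (r ^ j)) :
    -- σ w = ξ w, i.e. multiplication by w is σ-equivariant A{i+1} → A{i}
    σ w = (ξ : R) * w ∧
    -- 0 → A{i+1} → A{i} : injectivity of multiplication by w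
    Function.Injective (fun x : R => w * x) ∧
    -- exactness against the projection onto the quotient, which is surjective
    Function.Exact (fun x : R => w * x) (Ideal.Quotient.mk (Ideal.span {w})) ∧
    Function.Surjective (Ideal.Quotient.mk (Ideal.span {w})) ∧
    -- the quotient is 𝔽_p
    Nat.card (R ⧸ Ideal.span {w}) = p ∧
    -- τ acts trivially on the quotient
    (∀ x : R, ζ * x - x ∈ Ideal.span {w}) ∧
    -- σ acts on the quotient by multiplication by ξ^i
    (∀ x : R, (ξ : R) ^ i * σ x - (ξ : R) ^ i * x ∈ Ideal.span {w}) := by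
  have hpp : p.Prime := Fact.out
  have hp1 : 1 < p := hpp.one_lt
  set π : R := ζ - 1 with hπ
  have hζ1 : ζ = 1 + π := by rw [hπ]; ring
  have hπ0 : π ≠ 0 := sub_ne_zero.mpr (hζ.ne_one hp1)
  set b : R := ((ξ⁻¹ : Rˣ) : R) with hb
  have hξb : (ξ : R) * b = 1 := ξ.mul_inv
  have hξ0 : (ξ : R) ≠ 0 := ξ.ne_zero
  have hσb : σ b = b := by
    have h1 : (ξ : R) * σ b = 1 := by rw [← hσξ, ← map_mul, hξb, map_one]
    exact mul_left_cancel₀ hξ0 (h1.trans hξb.symm)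
  have hξm : (ξ : R) ^ m = 1 := hξ.pow_eq_one
  have hbm : b ^ m = 1 := by
    have h1 : (ξ : R) ^ m * b ^ m = 1 := by rw [← mul_pow, hξb, one_pow]
    rw [hξm, one_mul] at h1; exact h1
  have hbne1 : b ≠ 1 := by
    intro h
    apply hξ.ne_one hm1
    rw [← hξb, h, mul_one]
  have hsum0 : ∑ j ∈ Finset.range m, b ^ j = 0 := by
    have h := geom_sum_mul b m
    rw [hbm, sub_self] at h
    rcases mul_eq_zero.mp h with h | h
    · exact h
    · exact absurd (sub_eq_zero.mp h) hbne1
  have hw' : w = ∑ j ∈ Finset.range m, b ^ j * ζ ^ (r ^ j) := by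
    rw [hw]
    refine Finset.sum_congr rfl fun j _ => ?_
    congr 1
    rw [zpow_neg, zpow_natCast, ← inv_pow, Units.val_pow_eq_pow_val]
  -- r^m ≡ 1 mod p, so ζ^(r^m) = ζ
  have hrm : r ^ m ≡ 1 [MOD p] := by
    have h1 : ((r ^ m : ℕ) : ZMod p) = ((1 : ℕ) : ZMod p) := by
      push_cast
      rw [← hr]
      exact pow_orderOf_eq_one _
    exact (ZMod.natCast_eq_natCast_iff _ _ _).mp h1
  have hop : orderOf ζ = p := hζ.eq_orderOf.symm
  have hζrm : ζ ^ (r ^ m) = ζ := by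
    have h1 : r ^ m % p = 1 := by
      have h2 : r ^ m % p = 1 % p := hrm
      rwa [Nat.mod_eq_of_lt hp1] at h2
    conv_lhs => rw [← Nat.div_add_mod (r ^ m) p]
    rw [pow_add, pow_mul, hζ.pow_eq_one, one_pow, one_mul, h1, pow_one]
  -- Part 1 : σ w = ξ w
  have hσw : σ w = (ξ : R) * w := by
    set g : ℕ → R := fun k => (ξ : R) * b ^ k * ζ ^ (r ^ k) with hg
    have key : ∀ j : ℕ, σ (b ^ j * ζ ^ (r ^ j)) = g (j + 1) := by
      intro j
      have hb' : (ξ : R) * b ^ (j + 1) = b ^ j := by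
        rw [pow_succ', ← mul_assoc, hξb, one_mul]
      show σ (b ^ j * ζ ^ (r ^ j)) = (ξ : R) * b ^ (j + 1) * ζ ^ (r ^ (j + 1))
      rw [map_mul, map_pow, hσb, map_pow, hσζ, ← pow_mul, hb']
      congr 2
      exact (pow_succ' r j).symm
    have hσw1 : σ w = ∑ j ∈ Finset.range m, g (j + 1) := by
      rw [hw', map_sum]
      exact Finset.sum_congr rfl fun j _ => key j
    have hgm : g m = g 0 := by
      simp [hg, hbm, hζrm]
    calc σ w = ∑ j ∈ Finset.range m, g (j + 1) := hσw1
      _ = ∑ j ∈ Finset.range m, g j := by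
          have h1 := Finset.sum_range_succ' g m
          have h2 := Finset.sum_range_succ g m
          have h3 := h1.symm.trans h2
          rw [hgm] at h3
          exact add_right_cancel h3
      _ = (ξ : R) * w := by
          rw [hw', Finset.mul_sum]
          refine Finset.sum_congr rfl fun j _ => ?_
          show (ξ : R) * b ^ j * ζ ^ (r ^ j) = (ξ : R) * (b ^ j * ζ ^ (r ^ j))
          rw [mul_assoc]
  -- π divides p
  have hQfin : Finite (R ⧸ Ideal.span {π}) := Nat.finite_of_card_ne_zero (by rw [hcard]; omega)
  have h0 : ((p : ℕ) : R ⧸ Ideal.span {π}) = 0 := by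
    have h1 := card_nsmul_eq_zero' (G := R ⧸ Ideal.span {π}) (x := (1 : R ⧸ Ideal.span {π}))
    rw [hcard, nsmul_eq_mul, mul_one] at h1
    exact h1
  have hπp : π ∣ (p : R) := by
    have h1 : (Ideal.Quotient.mk (Ideal.span {π})) (p : R) = 0 := by
      rw [map_natCast]; exact h0
    exact Ideal.mem_span_singleton.mp (Ideal.Quotient.eq_zero_iff_mem.mp h1)
  -- w = π * unit
  have hπξr : π ∣ (ξ : R) - (r : R) := hπp.trans hξr
  have hS : ∀ j : ℕ, π ∣ (b ^ j * ((r ^ j : ℕ) : R) - 1) := by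
    intro j
    have h1 : (ξ : R) ^ j * b ^ j = 1 := by rw [← mul_pow, hξb, one_pow]
    have h2 : π ∣ ((ξ : R) ^ j - (r : R) ^ j) := hπξr.trans (sub_dvd_pow_sub_pow _ _ j)
    obtain ⟨d, hd⟩ := h2
    refine ⟨-(b ^ j * d), ?_⟩
    have h3 : ((r ^ j : ℕ) : R) = (r : R) ^ j := by push_cast; ring
    rw [h3, ← h1]
    have h4 : (r : R) ^ j = (ξ : R) ^ j - π * d := by rw [← hd]; ring
    rw [h4]; ring
  set S : R := ∑ j ∈ Finset.range m, b ^ j * ((r ^ j : ℕ) : R) with hSdef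
  have hw2 : w - S * π ∈ Ideal.span {π ^ 2} := by
    have h1 : w - S * π =
        ∑ j ∈ Finset.range m, (b ^ j * ζ ^ (r ^ j) - b ^ j * ((r ^ j : ℕ) : R) * π - b ^ j) := by
      rw [Finset.sum_sub_distrib, Finset.sum_sub_distrib, hsum0, sub_zero, hw', hSdef,
        ← Finset.sum_mul]
    rw [h1]
    refine Ideal.sum_mem _ fun j _ => ?_
    obtain ⟨c, hc⟩ := binom_aux π (r ^ j)
    rw [← hζ1] at hc
    have h2 : b ^ j * ζ ^ (r ^ j) - b ^ j * ((r ^ j : ℕ) : R) * π - b ^ j =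
        π ^ 2 * (b ^ j * c) := by rw [hc]; ring
    rw [h2]
    exact Ideal.mem_span_singleton.mpr ⟨b ^ j * c, rfl⟩
  obtain ⟨c, hc⟩ := Ideal.mem_span_singleton.mp hw2
  have hSm : π ∣ S - (m : R) := by
    have h1 : S - (m : R) = ∑ j ∈ Finset.range m, (b ^ j * ((r ^ j : ℕ) : R) - 1) := by
      rw [Finset.sum_sub_distrib, Finset.sum_const, Finset.card_range, nsmul_eq_mul, mul_one,
        hSdef]
    rw [h1]
    exact Finset.dvd_sum fun j _ => hS j
  obtain ⟨t, ht⟩ := hSm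
  set u : R := (m : R) + π * (t + c) with hu
  have hwu : w = π * u := by
    have hS' : S = (m : R) + π * t := by rw [← ht]; ring
    have hw3 : w = S * π + π ^ 2 * c := by rw [← hc]; ring
    rw [hw3, hS', hu]; ring
  have huu : IsUnit u := by
    by_contra h
    have h1 : π * (t + c) ∈ nonunits R := fun hu' => hζnu (isUnit_of_mul_isUnit_left hu')
    have h2 : -(π * (t + c)) ∈ nonunits R := fun hu' => h1 (by simpa using hu'.neg)
    have h3 : (m : R) ∈ nonunits R := by
      have h4 := IsLocalRing.nonunits_add (a := u) (b := -(π * (t + c))) h h2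
      have h5 : u + -(π * (t + c)) = (m : R) := by rw [hu]; ring
      rwa [h5] at h4
    exact h3 hmu
  have hspan : Ideal.span {w} = Ideal.span {π} := by
    refine Ideal.span_singleton_eq_span_singleton.mpr ?_
    exact (Associated.symm ⟨huu.unit, by rw [IsUnit.unit_spec, ← hwu]⟩)
  have hw0 : w ≠ 0 := by
    rw [hwu]
    exact mul_ne_zero hπ0 huu.ne_zero
  -- σ x ≡ x mod π
  have hσπ : ∀ x ∈ Ideal.span ({π} : Set R), σ x ∈ Ideal.span ({π} : Set R) := by
    intro x hx
    obtain ⟨d, hd⟩ := Ideal.mem_span_singleton.mp hx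
    rw [hd, map_mul]
    refine Ideal.mem_span_singleton.mpr (Dvd.dvd.mul_right ?_ _)
    rw [hπ, map_sub, map_one, hσζ]
    simpa using sub_dvd_pow_sub_pow ζ 1 r
  have hQnt : Nontrivial (R ⧸ Ideal.span {π}) := by
    haveI := hQfin
    refine Finite.one_lt_card_iff_nontrivial.mp ?_
    rw [hcard]; omega
  have hchar : CharP (R ⧸ Ideal.span {π}) p := by
    obtain ⟨q, hq⟩ := CharP.exists (R ⧸ Ideal.span {π})
    haveI := hq
    haveI := hQnt
    have hqp : q ∣ p := (CharP.cast_eq_zero_iff (R ⧸ Ideal.span {π}) q p).mp h0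
    rcases (hpp.eq_one_or_self_of_dvd q hqp) with h | h
    · exact absurd h (CharP.char_ne_one (R ⧸ Ideal.span {π}) q)
    · rwa [h] at hq
  haveI := hchar
  haveI : NeZero p := ⟨hpp.pos.ne'⟩
  have hsurj : Function.Surjective (ZMod.castHom (dvd_refl p) (R ⧸ Ideal.span {π})) := by
    have hinj : Function.Injective (ZMod.castHom (dvd_refl p) (R ⧸ Ideal.span {π})) :=
      (ZMod.castHom (dvd_refl p) (R ⧸ Ideal.span {π})).injective
    have hb' := (Nat.bijective_iff_injective_and_card
      (ZMod.castHom (dvd_refl p) (R ⧸ Ideal.span {π}))).mpr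
      ⟨hinj, by rw [Nat.card_zmod, hcard]⟩
    exact hb'.2
  have key : ∀ y : R, σ y - y ∈ Ideal.span ({π} : Set R) := by
    intro y
    obtain ⟨z, hz⟩ := hsurj (Ideal.Quotient.mk (Ideal.span {π}) y)
    obtain ⟨k, rfl⟩ := ZMod.natCast_zmod_surjective (n := p) z
    rw [map_natCast] at hz
    have hy : y - (k : R) ∈ Ideal.span ({π} : Set R) := by
      rw [← Ideal.Quotient.eq_zero_iff_mem, map_sub, map_natCast, hz, sub_self]
    have h2 := hσπ _ hy
    rw [map_sub, map_natCast] at h2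
    have h3 : σ y - y = (σ y - (k : R)) - (y - (k : R)) := by ring
    rw [h3]
    exact Ideal.sub_mem _ h2 hy
  refine ⟨hσw, fun x y hxy => mul_left_cancel₀ hw0 hxy, ?_, Ideal.Quotient.mk_surjective, ?_,
    ?_, ?_⟩
  · intro y
    rw [Ideal.Quotient.eq_zero_iff_mem, Ideal.mem_span_singleton]
    constructor
    · rintro ⟨z, hz⟩; exact ⟨z, hz.symm⟩
    · rintro ⟨z, hz⟩; exact ⟨z, hz.symm⟩
  · rw [hspan]; exact hcard
  · intro x
    rw [hspan]
    refine Ideal.mem_span_singleton.mpr ⟨x, ?_⟩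
    rw [hπ]; ring
  · intro x
    rw [hspan]
    have h1 : (ξ : R) ^ i * σ x - (ξ : R) ^ i * x = (ξ : R) ^ i * (σ x - x) := by ring
    rw [h1]
    exact Ideal.mul_mem_left _ _ (key x)
end

section
/- Let p be an odd prime, m a divisor of p-1, and G the metacyclic group of order pm as above. The element w = sum_{j=0}^{m-1} xi^{-j} zeta^{r^j} in Z_p[zeta] satisfies w congruent to m(zeta - 1) modulo (zeta-1)^2, and in particular w is a uniformizer times a unit: its (zeta-1)-adic valuation is exactly 1. -/
/-!
STATEMENT 11: `p` odd prime, `m ∣ p - 1`, `m > 1`, `r` of order `m` in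
`(ℤ/p)ˣ`, `ξ` the `m`-th root of unity congruent to `r` mod `p`, `ζ` a
primitive `p`-th root of unity, all inside (an abstraction of) `ℤ_p[ζ]`:
an integral domain `R` in which `m` is invertible and `ζ - 1` is not.
Then `w = ∑_{j<m} ξ^{-j} ζ^{r^j}` satisfies `w ≡ m (ζ - 1) mod (ζ-1)²`;
in particular the `(ζ-1)`-adic valuation of `w` is exactly `1`, i.e.
`(ζ-1) ∣ w` but `(ζ-1)² ∤ w`.
-/

theorem stmt_11 (p m r : ℕ) [Fact p.Prime] (hp : Odd p)
    (hm : m ∣ p - 1) (hm1 : 1 < m) (hr : orderOf (r : ZMod p) = m)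
    (R : Type) [CommRing R] [IsDomain R]
    (ζ : R) (hζ : IsPrimitiveRoot ζ p) (hζnu : ¬ IsUnit (ζ - 1))
    (ξ : Rˣ) (hξ : IsPrimitiveRoot (ξ : R) m)
    (hξr : (p : R) ∣ (ξ : R) - (r : R)) (hmu : IsUnit (m : R))
    (w : R) (hw : w = ∑ j ∈ Finset.range m, ((ξ ^ (-(j : ℤ)) : Rˣ) : R) * ζ ^ (r ^ j)) :
    (ζ - 1) ^ 2 ∣ (w - (m : R) * (ζ - 1)) ∧
    (ζ - 1) ∣ w ∧ ¬ (ζ - 1) ^ 2 ∣ w := by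
  have hp1 : 1 < p := (Fact.out : p.Prime).one_lt
  set t : R := ζ - 1 with ht
  have hζ1 : ζ = 1 + t := by ring
  have htne : t ≠ 0 := sub_ne_zero.mpr (hζ.ne_one hp1)
  -- binomial-type expansion
  have key : ∀ n : ℕ, ∃ c : R, (1 + t) ^ n = 1 + n * t + t ^ 2 * c := by
    intro n
    induction n with
    | zero => exact ⟨0, by simp⟩
    | succ n ih =>
      obtain ⟨c, hc⟩ := ih
      refine ⟨c + n + t * c, ?_⟩
      rw [pow_succ, hc]
      push_cast
      ring
  choose c hc using key
  -- the unit u = ξ⁻¹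
  set u : R := ((ξ⁻¹ : Rˣ) : R) with hu
  have huξ : u * (ξ : R) = 1 := by rw [hu, ← Units.val_mul, inv_mul_cancel, Units.val_one]
  have huj : ∀ j : ℕ, ((ξ ^ (-(j : ℤ)) : Rˣ) : R) = u ^ j := by
    intro j
    rw [zpow_neg, zpow_natCast, hu, ← inv_pow, Units.val_pow_eq_pow_val]
  have hum : u ^ m = 1 := by
    have hξm : (ξ : R) ^ m = 1 := hξ.pow_eq_one
    have : u ^ m * (ξ : R) ^ m = 1 := by
      rw [← mul_pow, huξ, one_pow]
    rw [hξm, mul_one] at this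
    exact this
  have hune : u ≠ 1 := by
    intro h
    have : (ξ : R) = 1 := by
      have := huξ
      rw [h, one_mul] at this
      exact this
    exact hξ.ne_one hm1 this
  have hsum0 : ∑ j ∈ Finset.range m, u ^ j = 0 := by
    have := geom_sum_mul u m
    rw [hum, sub_self] at this
    rcases mul_eq_zero.mp this with h | h
    · exact h
    · exact absurd (sub_eq_zero.mp h) hune
  -- t ∣ p
  have htp : t ∣ (p : R) := by
    have hζp : (1 + t) ^ p = 1 := by rw [← hζ1]; exact hζ.pow_eq_one
    have h := hc p
    rw [hζp] at h
    have : t * (p : R) = t * (-(t * c p)) := by linear_combination -h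
    have := mul_left_cancel₀ htne this
    exact ⟨-(c p), by rw [this]; ring⟩
  -- p ∣ S₁ - m where S₁ = ∑ u^j * r^j
  set S : R := ∑ j ∈ Finset.range m, u ^ j * (r : R) ^ j with hS
  have hpS : (p : R) ∣ S - (m : R) := by
    have : S - (m : R) = ∑ j ∈ Finset.range m, (u ^ j * (r : R) ^ j - 1) := by
      rw [hS, Finset.sum_sub_distrib]
      simp
    rw [this]
    apply Finset.dvd_sum
    intro j _
    have h1 : (p : R) ∣ (ξ : R) ^ j - (r : R) ^ j := hξr.trans (sub_dvd_pow_sub_pow _ _ j)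
    have h2 : u ^ j * (r : R) ^ j - 1 = -(u ^ j * ((ξ : R) ^ j - (r : R) ^ j)) := by
      have : u ^ j * (ξ : R) ^ j = 1 := by rw [← mul_pow, huξ, one_pow]
      rw [mul_sub, this]; ring
    rw [h2]
    exact (Dvd.dvd.mul_left h1 _).neg_right
  have htS : t ∣ S - (m : R) := htp.trans hpS
  -- main congruence
  have hmain : t ^ 2 ∣ w - (m : R) * t := by
    have hwexp : w = ∑ j ∈ Finset.range m,
        (u ^ j + u ^ j * (r : R) ^ j * t + t ^ 2 * (u ^ j * c (r ^ j))) := by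
      rw [hw]
      apply Finset.sum_congr rfl
      intro j _
      rw [huj j, hζ1, hc (r ^ j)]
      push_cast
      ring
    have : w = 0 + S * t + t ^ 2 * ∑ j ∈ Finset.range m, u ^ j * c (r ^ j) := by
      rw [hwexp, Finset.sum_add_distrib, Finset.sum_add_distrib, hsum0,
        ← Finset.sum_mul, ← Finset.mul_sum, ← hS]
    obtain ⟨d, hd⟩ := htS
    refine ⟨d + ∑ j ∈ Finset.range m, u ^ j * c (r ^ j), ?_⟩
    linear_combination this + t * hd
  refine ⟨hmain, ?_, ?_⟩
  · obtain ⟨e, he⟩ := hmain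
    exact ⟨(m : R) + t * e, by linear_combination he⟩
  · intro hdvd
    have : t ^ 2 ∣ (m : R) * t := by
      have := dvd_sub hdvd hmain
      simpa using this
    obtain ⟨e, he⟩ := this
    have : t * (m : R) = t * (t * e) := by linear_combination he
    have hm' := mul_left_cancel₀ htne this
    exact hζnu (isUnit_of_dvd_unit ⟨e, hm'⟩ hmu)
end

section
/- Let E be an elliptic curve over a local field k with split multiplicative reduction, let K/k be a finite Galois extension with group G, and let q in k be the Tate parameter so that E(K) is G-isomorphic to K^x/q^Z. Let p be an odd prime such that E(K) has finite p-primary torsion. Then the cokernel D of the norm map E(K) p-completed -> E(k) p-completed is isomorphic to the quotient of the p-primary part of k^x/Norm(K^x) by the class of q. -/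
/-!
STATEMENT 19: Tate curve over a local field.  `K/k` finite Galois with group
`G`; by Tate's uniformisation, `E(K) = K^× / q^ℤ` `G`-equivariantly, with
`q ∈ k^× = (K^×)^G` the Tate parameter, and `E(k) = k^× / q^ℤ`.  We
axiomatise this: `U` is a multiplicative `G`-group (playing the role of
`K^×`), `q` a `G`-fixed element of infinite order, `EK = U ⧸ ⟨q⟩`,
`Ek = U^G ⧸ ⟨q⟩`, and the norm `ν x = ∏_g g • x`.  `p` is an odd prime such
that the `p`-primary torsion of `EK` is finite, and (as holds for local
fields) `U^G / ν(U)` is finite.  Then the cokernel `D` of the induced norm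
map on `p`-adic completions (`PComp` below: inverse limit of `A/A^{pⁿ}`)
is isomorphic to the quotient of the `p`-primary part of `U^G/ν(U)`
(i.e. of `k^×/N_{K/k}(K^×)`) by the subgroup generated by the class of `q`.
-/

/-- the subgroup of `k`-th powers of a commutative group -/
def powSub (A : Type*) [CommGroup A] (k : ℕ) : Subgroup A := (powMonoidHom k).range

/-- transition maps of the `p`-completion tower `A/A^{p^{n+1}} → A/A^{p^n}` -/
def pTrans (p : ℕ) (A : Type*) [CommGroup A] (n : ℕ) :
    (A ⧸ powSub A (p ^ (n + 1))) →* (A ⧸ powSub A (p ^ n)) :=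
  QuotientGroup.map _ _ (MonoidHom.id A)
    (by
      rintro a ⟨x, rfl⟩
      refine ⟨x ^ p, ?_⟩
      simp only [powMonoidHom_apply, MonoidHom.id_apply, ← pow_mul, pow_succ]
      rw [mul_comm])

/-- the `p`-adic completion `lim_n A/A^{p^n}` of a commutative group `A` -/
def PComp (p : ℕ) (A : Type*) [CommGroup A] : Subgroup (∀ n : ℕ, A ⧸ powSub A (p ^ n)) where
  carrier := {f | ∀ n, pTrans p A n (f (n + 1)) = f n}
  one_mem' := by intro n; simp
  mul_mem' := by
    intro a b ha hb n
    simp only [Pi.mul_apply, map_mul, ha n, hb n]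
  inv_mem' := by
    intro a ha n
    simp only [Pi.inv_apply, map_inv, ha n]

/-- functoriality of the `p`-adic completion -/
def pCompMap (p : ℕ) {A B : Type*} [CommGroup A] [CommGroup B] (φ : A →* B) :
    ↥(PComp p A) →* ↥(PComp p B) where
  toFun f := ⟨fun n => QuotientGroup.map _ _ φ
      (by rintro a ⟨x, rfl⟩; exact ⟨φ x, by simp [powMonoidHom_apply]⟩) (f.1 n), by
    intro n
    have hcomm : ∀ x : A ⧸ powSub A (p ^ (n + 1)),
        pTrans p B n (QuotientGroup.map _ _ φ
          (by rintro a ⟨x, rfl⟩; exact ⟨φ x, by simp [powMonoidHom_apply]⟩) x) =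
        QuotientGroup.map _ _ φ
          (by rintro a ⟨x, rfl⟩; exact ⟨φ x, by simp [powMonoidHom_apply]⟩)
          (pTrans p A n x) := by
      intro x
      induction x using QuotientGroup.induction_on with
      | H a => simp [pTrans, QuotientGroup.map_mk]
    rw [hcomm, f.2 n]⟩
  map_one' := by
    ext n
    simp
  map_mul' f g := by
    ext n
    simp

namespace Stmt19

lemma mem_powSub {A : Type*} [CommGroup A] {k : ℕ} {x : A} :
    x ∈ powSub A k ↔ ∃ y : A, y ^ k = x := by
  simp [powSub, MonoidHom.mem_range, powMonoidHom_apply]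

lemma pTrans_mk (p : ℕ) {A : Type*} [CommGroup A] (n : ℕ) (x : A) :
    pTrans p A n (QuotientGroup.mk x) = QuotientGroup.mk x := by
  simp [pTrans, QuotientGroup.map_mk]

lemma pCompMap_coe (p : ℕ) {A B : Type*} [CommGroup A] [CommGroup B] (φ : A →* B)
    (f : ↥(PComp p A)) (n : ℕ) (x : A) (hx : QuotientGroup.mk x = f.1 n) :
    ((pCompMap p φ f : ∀ n, B ⧸ powSub B (p ^ n)) n : B ⧸ powSub B (p ^ n)) =
      QuotientGroup.mk (φ x) := by
  show QuotientGroup.map _ _ φ _ (f.1 n) = _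
  rw [← hx, QuotientGroup.map_mk]

/-- the constant family -/
def constPC (p : ℕ) (A : Type*) [CommGroup A] : A →* ↥(PComp p A) where
  toFun x := ⟨fun _ => QuotientGroup.mk x, fun n => pTrans_mk p n x⟩
  map_one' := by
    apply Subtype.ext
    funext n
    simp
  map_mul' x y := by
    apply Subtype.ext
    funext n
    simp

lemma pCompMap_constPC (p : ℕ) {A B : Type*} [CommGroup A] [CommGroup B] (φ : A →* B)
    (x : A) : pCompMap p φ (constPC p A x) = constPC p B (φ x) := by
  apply Subtype.ext
  funext n
  exact pCompMap_coe p φ (constPC p A x) n x rfl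

/-- pushing components of a compatible family down -/
lemma pushdown (p : ℕ) {A : Type*} [CommGroup A] (F : ↥(PComp p A)) :
    ∀ (m n : ℕ), n ≤ m → ∀ x : A,
      (QuotientGroup.mk x : A ⧸ powSub A (p ^ m)) = F.1 m →
      (QuotientGroup.mk x : A ⧸ powSub A (p ^ n)) = F.1 n := by
  intro m
  induction m with
  | zero =>
    intro n hn x h
    obtain rfl : n = 0 := Nat.le_zero.mp hn
    exact h
  | succ m ih =>
    intro n hn x h
    rcases Nat.eq_or_lt_of_le hn with rfl | hlt
    · exact h
    · have h' := congrArg (pTrans p A m) h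
      rw [pTrans_mk, F.2 m] at h'
      exact ih n (Nat.lt_succ_iff.mp hlt) x h'


lemma phi3_exists (p : ℕ) [hp : Fact p.Prime] (B : Type*) [CommGroup B] [Finite B] :
    ∃ Φ : ↥(PComp p B) →* ↥(CommGroup.primaryComponent B p),
      Function.Injective Φ ∧
      ∀ (β : B) (hβ : β ∈ CommGroup.primaryComponent B p),
        Φ (constPC p B β) = ⟨β, hβ⟩ := by
  classical
  have hpp : p.Prime := hp.out
  set e := Monoid.exponent B with he_def
  have he : e ≠ 0 := Monoid.exponent_ne_zero_of_finite
  set v := e.factorization p with hv_def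
  set m := e / p ^ v with hm_def
  have hvm : p ^ v * m = e := Nat.ordProj_mul_ordCompl_eq_self e p
  have hnd : ¬ p ∣ m := Nat.not_dvd_ordCompl hpp he
  have hpcop : Nat.Coprime p m := (hpp.coprime_iff_not_dvd).mpr hnd
  have hone : 1 < p ^ (v + 1) := Nat.one_lt_pow (Nat.succ_ne_zero v) hpp.one_lt
  obtain ⟨m', -, hm'⟩ := Nat.exists_mul_mod_eq_one_of_coprime
    ((hpcop.pow_left (v + 1)).symm) hone
  set N := m * m' with hN_def
  have hNmod : N % p ^ (v + 1) = 1 := hm'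
  have hNmodeq : N ≡ 1 [MOD p ^ (v + 1)] := by
    show N % p ^ (v + 1) = 1 % p ^ (v + 1)
    rw [hNmod, Nat.mod_eq_of_lt hone]
  have hexp : ∀ x : B, x ^ e = 1 := fun x => Monoid.pow_exponent_eq_one x
  have hkill : ∀ x : B, (x ^ N) ^ (p ^ (v + 1)) = 1 := by
    intro x
    have harith : N * p ^ (v + 1) = e * (m' * p) := by
      rw [← hvm, pow_succ]; ring
    rw [← pow_mul, harith, pow_mul, hexp, one_pow]
  have hmemN : ∀ x : B, x ^ N ∈ CommGroup.primaryComponent B p := by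
    intro x
    have hd : orderOf (x ^ N) ∣ p ^ (v + 1) := orderOf_dvd_of_pow_eq_one (hkill x)
    obtain ⟨j, _, hj⟩ := (Nat.dvd_prime_pow hpp).mp hd
    exact CommGroup.mem_primaryComponent_iff_orderOf.mpr ⟨j, hj⟩
  have hfix : ∀ β : B, β ∈ CommGroup.primaryComponent B p → β ^ N = β := by
    intro β hβ
    obtain ⟨j, hj⟩ := CommGroup.mem_primaryComponent_iff_orderOf.mp hβ
    have h1 : orderOf β ∣ e := Monoid.order_dvd_exponent β
    have h2 : p ^ j ∣ p ^ v := by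
      have h2' : p ^ j ∣ p ^ v * m := by rw [hvm, ← hj]; exact h1
      exact (hpcop.pow_left j).dvd_of_dvd_mul_right h2'
    have h3 : orderOf β ∣ p ^ (v + 1) := by
      rw [hj]; exact h2.trans (pow_dvd_pow p (Nat.le_succ v))
    have h4 : N ≡ 1 [MOD orderOf β] := hNmodeq.of_dvd h3
    calc β ^ N = β ^ 1 := pow_eq_pow_iff_modEq.mpr h4
    _ = β := pow_one β
  have hstab : ∀ n, v ≤ n → ∀ x : B, x ∈ powSub B (p ^ n) → x ∈ powSub B (p ^ (n + 1)) := by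
    intro n hn x hx
    obtain ⟨z, hz⟩ := mem_powSub.mp hx
    have hxm : x ^ m = 1 := by
      rw [← hz, ← pow_mul]
      have harith : p ^ n * m = e * p ^ (n - v) := by
        have hsplit : p ^ n = p ^ v * p ^ (n - v) := by
          rw [← pow_add]; congr 1; omega
        rw [← hvm, hsplit]; ring
      rw [harith, pow_mul, hexp, one_pow]
    by_cases hm1 : m = 1
    · have hx1 : x = 1 := by rw [← pow_one x, ← hm1, hxm]
      rw [hx1]; exact one_mem _
    · have hm0 : m ≠ 0 := by
        intro h0; rw [h0, mul_zero] at hvm; exact he hvm.symm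
      have hm2 : 1 < m := Nat.one_lt_iff_ne_zero_and_ne_one.mpr ⟨hm0, hm1⟩
      obtain ⟨c, -, hc⟩ := Nat.exists_mul_mod_eq_one_of_coprime
        (hpcop.pow_left (n + 1)) hm2
      have hdm : m * (p ^ (n + 1) * c / m) + 1 = p ^ (n + 1) * c := by
        have := Nat.div_add_mod (p ^ (n + 1) * c) m
        omega
      refine mem_powSub.mpr ⟨x ^ c, ?_⟩
      rw [← pow_mul, mul_comm c (p ^ (n + 1)), ← hdm, pow_add, pow_mul, hxm, one_pow,
        one_mul, pow_one]
  -- the homomorphism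
  have hker0 : powSub B (p ^ v) ≤ (powMonoidHom N : B →* B).ker := by
    intro x hx
    obtain ⟨y, hy⟩ := mem_powSub.mp hx
    have h1 : (y ^ p ^ v) ^ N = 1 := by
      rw [← pow_mul]
      have harith : p ^ v * N = e * m' := by rw [← hvm, hN_def]; ring
      rw [harith, pow_mul, hexp, one_pow]
    rw [MonoidHom.mem_ker, powMonoidHom_apply, ← hy]
    exact h1
  set w : (B ⧸ powSub B (p ^ v)) →* B :=
    QuotientGroup.lift (powSub B (p ^ v)) (powMonoidHom N) hker0 with hw
  set Φ0 : ↥(PComp p B) →* B :=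
    w.comp ((Pi.evalMonoidHom (fun n => B ⧸ powSub B (p ^ n)) v).comp
      (PComp p B).subtype) with hΦ0
  have hΦ0_apply : ∀ (f : ↥(PComp p B)) (x : B), QuotientGroup.mk x = f.1 v →
      Φ0 f = x ^ N := by
    intro f x hx
    show w (f.1 v) = x ^ N
    rw [← hx]
    show w (QuotientGroup.mk x) = x ^ N
    rw [hw, QuotientGroup.lift_mk', powMonoidHom_apply]
  have hΦ0mem : ∀ f, Φ0 f ∈ CommGroup.primaryComponent B p := by
    intro f
    obtain ⟨x, hx⟩ := QuotientGroup.mk_surjective (f.1 v)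
    rw [hΦ0_apply f x hx]
    exact hmemN x
  refine ⟨Φ0.codRestrict _ hΦ0mem, ?_, ?_⟩
  · rw [injective_iff_map_eq_one]
    intro f hf
    have hf0 : Φ0 f = 1 := congrArg Subtype.val hf
    obtain ⟨x, hx⟩ := QuotientGroup.mk_surjective (f.1 v)
    have hxN : x ^ N = 1 := by rw [← hΦ0_apply f x hx]; exact hf0
    have hxmem : x ∈ powSub B (p ^ v) := by
      have hdm : p ^ (v + 1) * (N / p ^ (v + 1)) + 1 = N := by
        have := Nat.div_add_mod N (p ^ (v + 1)); omega
      refine mem_powSub.mpr ⟨(x ^ (p * (N / p ^ (v + 1))))⁻¹, ?_⟩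
      rw [inv_pow, ← pow_mul]
      have h2 : p * (N / p ^ (v + 1)) * p ^ v = p ^ (v + 1) * (N / p ^ (v + 1)) := by
        rw [pow_succ]; ring
      rw [h2]
      have h3 : x ^ (p ^ (v + 1) * (N / p ^ (v + 1))) * x = 1 := by
        have h4 := hxN
        rw [← hdm, pow_add, pow_one] at h4
        exact h4
      exact inv_eq_of_mul_eq_one_right h3
    have hfv : f.1 v = 1 := by rw [← hx, QuotientGroup.eq_one_iff]; exact hxmem
    have hup : ∀ j, f.1 (v + j) = 1 := by
      intro j
      induction j with
      | zero => exact hfv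
      | succ j ih =>
        obtain ⟨y, hy⟩ := QuotientGroup.mk_surjective (f.1 (v + j + 1))
        have h1 : (QuotientGroup.mk y : B ⧸ powSub B (p ^ (v + j))) = 1 := by
          have h5 := f.2 (v + j)
          rw [← hy, pTrans_mk] at h5
          rw [h5, ih]
        have h2 : y ∈ powSub B (p ^ (v + j)) := (QuotientGroup.eq_one_iff y).mp h1
        have h3 : y ∈ powSub B (p ^ (v + j + 1)) := hstab (v + j) (Nat.le_add_right v j) y h2
        show (f : ∀ n, B ⧸ powSub B (p ^ n)) (v + j + 1) = 1
        rw [← hy, QuotientGroup.eq_one_iff]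
        exact h3
    apply Subtype.ext; funext n
    show f.1 n = 1
    rcases Nat.le_total v n with h | h
    · have h6 := hup (n - v); rwa [Nat.add_sub_cancel' h] at h6
    · have h1 : (QuotientGroup.mk (1 : B) : B ⧸ powSub B (p ^ v)) = f.1 v := by
        rw [hfv]; simp
      have h7 := pushdown p f v n h 1 h1
      rw [← h7]; simp
  · intro β hβ
    apply Subtype.ext
    show Φ0 (constPC p B β) = β
    rw [hΦ0_apply (constPC p B β) β rfl]
    exact hfix β hβ

lemma main (p : ℕ) [hp : Fact p.Prime] {X Y Bf : Type*} [CommGroup X] [CommGroup Y]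
    [CommGroup Bf] [Finite Bf] (ν' : X →* Y) (π : Y →* Bf)
    (hs : Function.Surjective π) (hk : ∀ y : Y, π y = 1 ↔ y ∈ ν'.range) :
    Nonempty ((↥(PComp p Y) ⧸ (pCompMap p ν').range) ≃*
      ↥(CommGroup.primaryComponent Bf p)) := by
  classical
  have hpp : p.Prime := hp.out
  obtain ⟨Φ, hΦinj, hΦconst⟩ := phi3_exists p Bf
  set Θ : ↥(PComp p Y) →* ↥(CommGroup.primaryComponent Bf p) :=
    Φ.comp (pCompMap p π) with hΘ
  have hsurj : Function.Surjective Θ := by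
    rintro ⟨β, hβ⟩
    obtain ⟨y, hy⟩ := hs β
    refine ⟨constPC p Y y, ?_⟩
    show Φ (pCompMap p π (constPC p Y y)) = _
    rw [pCompMap_constPC, hy]
    exact hΦconst β hβ
  have hcomp : ∀ g : ↥(PComp p X), pCompMap p π (pCompMap p ν' g) = 1 := by
    intro g
    apply Subtype.ext
    funext n
    obtain ⟨x, hx⟩ := QuotientGroup.mk_surjective (g.1 n)
    have h1 := pCompMap_coe p ν' g n x hx
    have h2 := pCompMap_coe p π (pCompMap p ν' g) n (ν' x) h1.symm
    show ((pCompMap p π (pCompMap p ν' g) : ∀ n, Bf ⧸ powSub Bf (p ^ n)) n) = 1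
    rw [h2]
    have h3 : π (ν' x) = 1 := (hk _).mpr ⟨x, rfl⟩
    rw [h3]
    simp
  have hker : Θ.ker = (pCompMap p ν').range := by
    ext f
    rw [MonoidHom.mem_ker]
    constructor
    · intro hf
      have hf1 : pCompMap p π f = 1 := by
        apply hΦinj
        rw [map_one]
        exact hf
      have hA : ∀ n : ℕ, ∃ y : X,
          (QuotientGroup.mk (ν' y) : Y ⧸ powSub Y (p ^ n)) = f.1 n := by
        intro n
        obtain ⟨x, hx⟩ := QuotientGroup.mk_surjective (f.1 n)
        have h1 : (QuotientGroup.mk (π x) : Bf ⧸ powSub Bf (p ^ n)) = 1 := by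
          have h := pCompMap_coe p π f n x hx
          rw [hf1] at h
          exact h.symm
        have h2 : π x ∈ powSub Bf (p ^ n) := (QuotientGroup.eq_one_iff _).mp h1
        obtain ⟨z, hz⟩ := mem_powSub.mp h2
        obtain ⟨w0, hw0⟩ := hs z
        have h3 : π (x * (w0 ^ p ^ n)⁻¹) = 1 := by
          rw [map_mul, map_inv, map_pow, hw0, hz]
          exact mul_inv_cancel _
        obtain ⟨y, hy⟩ := (hk _).mp h3
        refine ⟨y, ?_⟩
        rw [hy, ← hx]
        rw [QuotientGroup.eq]
        have h4 : (x * (w0 ^ p ^ n)⁻¹)⁻¹ * x = w0 ^ p ^ n := by group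
        rw [h4]
        exact mem_powSub.mpr ⟨w0, rfl⟩
      set b := Nat.card Bf with hb_def
      have key : ∀ (n : ℕ) (d : Y), d ∈ ν'.range → d ∈ powSub Y (p ^ (b + n)) →
          ∃ t : X, d = ν' t ^ p ^ n := by
        intro n d hd hdp
        obtain ⟨w0, hw0⟩ := mem_powSub.mp hdp
        have h1 : (π w0) ^ p ^ (b + n) = 1 := by
          rw [← map_pow, hw0]
          exact (hk d).mpr hd
        obtain ⟨j, hjle, hj⟩ := (Nat.dvd_prime_pow hpp).mp (orderOf_dvd_of_pow_eq_one h1)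
        have hjb : j ≤ b := by
          have hpj : p ^ j ∣ b := hj ▸ orderOf_dvd_natCard (π w0)
          have h2 : p ^ j ≤ b := Nat.le_of_dvd Nat.card_pos hpj
          have h3 : j < 2 ^ j := Nat.lt_two_pow_self
          have h4 : 2 ^ j ≤ p ^ j := Nat.pow_le_pow_left hpp.two_le j
          omega
        have h5 : w0 ^ p ^ j ∈ ν'.range := by
          apply (hk _).mp
          rw [map_pow, ← hj]
          exact pow_orderOf_eq_one _
        obtain ⟨s, hs'⟩ := h5
        refine ⟨s ^ p ^ (b - j), ?_⟩
        rw [map_pow, hs', ← pow_mul, ← pow_mul, ← hw0]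
        congr 1
        rw [← pow_add, ← pow_add]
        congr 1
        omega
      have step : ∀ (n : ℕ) (y : X),
          (QuotientGroup.mk (ν' y) : Y ⧸ powSub Y (p ^ (b + n))) = f.1 (b + n) →
          ∃ y' : X,
            ((QuotientGroup.mk (ν' y') : Y ⧸ powSub Y (p ^ (b + (n + 1)))) =
              f.1 (b + (n + 1)))
            ∧ y' * y⁻¹ ∈ powSub X (p ^ n) := by
        intro n y hyP
        obtain ⟨z', hz'⟩ := hA (b + (n + 1))
        have hz'' : (QuotientGroup.mk (ν' z') : Y ⧸ powSub Y (p ^ (b + n))) = f.1 (b + n) :=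
          pushdown p f (b + (n + 1)) (b + n) (by omega) _ hz'
        have hd1 : (QuotientGroup.mk (ν' y * (ν' z')⁻¹) : Y ⧸ powSub Y (p ^ (b + n))) = 1 := by
          rw [QuotientGroup.mk_mul, QuotientGroup.mk_inv, hyP, hz'']
          exact mul_inv_cancel _
        have hd2 : ν' y * (ν' z')⁻¹ ∈ powSub Y (p ^ (b + n)) :=
          (QuotientGroup.eq_one_iff _).mp hd1
        have hd3 : ν' y * (ν' z')⁻¹ ∈ ν'.range := ⟨y * z'⁻¹, by rw [map_mul, map_inv]⟩
        obtain ⟨t, ht⟩ := key n _ hd3 hd2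
        refine ⟨y * t⁻¹ ^ p ^ n, ?_, ?_⟩
        · have h6 : ν' (y * t⁻¹ ^ p ^ n) = ν' z' := by
            rw [map_mul, map_pow, map_inv, inv_pow, ← ht]
            simp [mul_inv_rev, mul_comm, mul_left_comm, mul_assoc]
          rw [h6]
          exact hz'
        · have h7 : y * t⁻¹ ^ p ^ n * y⁻¹ = t⁻¹ ^ p ^ n := by
            simp [mul_comm, mul_left_comm, mul_assoc]
          rw [h7, inv_pow]
          exact inv_mem (mem_powSub.mpr ⟨t, rfl⟩)
      choose stepF hstep1 hstep2 using step
      obtain ⟨y0, hy0⟩ := hA (b + 0)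
      set seq : ∀ n : ℕ, {y : X //
          (QuotientGroup.mk (ν' y) : Y ⧸ powSub Y (p ^ (b + n))) = f.1 (b + n)} :=
        fun n => Nat.rec ⟨y0, hy0⟩
          (fun n prev => ⟨stepF n prev.1 prev.2, hstep1 n prev.1 prev.2⟩) n with hseq
      have hdiff : ∀ n, (seq (n + 1)).1 * ((seq n).1)⁻¹ ∈ powSub X (p ^ n) := by
        intro n
        have h8 : (seq (n + 1)).1 = stepF n (seq n).1 (seq n).2 := rfl
        rw [h8]
        exact hstep2 n (seq n).1 (seq n).2
      have hcompat : ∀ n, pTrans p X n (QuotientGroup.mk ((seq (n + 1)).1)) =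
          QuotientGroup.mk ((seq n).1) := by
        intro n
        rw [pTrans_mk, QuotientGroup.eq]
        have h9 : ((seq (n + 1)).1)⁻¹ * (seq n).1 =
            ((seq (n + 1)).1 * ((seq n).1)⁻¹)⁻¹ := by
          rw [mul_inv_rev, inv_inv, mul_comm]
        rw [h9]
        exact inv_mem (hdiff n)
      refine ⟨⟨fun n => QuotientGroup.mk ((seq n).1), hcompat⟩, ?_⟩
      apply Subtype.ext
      funext n
      have h10 := pCompMap_coe p ν' ⟨fun n => QuotientGroup.mk ((seq n).1), hcompat⟩ n
        ((seq n).1) rfl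
      rw [h10]
      exact pushdown p f (b + n) n (Nat.le_add_left n b) _ (seq n).2
    · rintro ⟨g, rfl⟩
      show Φ (pCompMap p π (pCompMap p ν' g)) = 1
      rw [hcomp g, map_one]
  exact ⟨(QuotientGroup.quotientMulEquivOfEq hker.symm).trans
    (QuotientGroup.quotientKerEquivOfSurjective Θ hsurj)⟩

lemma l1 (p : ℕ) [hp : Fact p.Prime] (A' : Type*) [CommGroup A'] [Finite A'] (u : A') :
    Nonempty ((↥(CommGroup.primaryComponent A' p) ⧸
        ((Subgroup.zpowers u).subgroupOf (CommGroup.primaryComponent A' p))) ≃*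
      ↥(CommGroup.primaryComponent (A' ⧸ Subgroup.zpowers u) p)) := by
  classical
  have hpp : p.Prime := hp.out
  have hmem : ∀ a : ↥(CommGroup.primaryComponent A' p),
      ((QuotientGroup.mk' (Subgroup.zpowers u)).comp
        (CommGroup.primaryComponent A' p).subtype) a ∈
        CommGroup.primaryComponent (A' ⧸ Subgroup.zpowers u) p := by
    rintro ⟨a, ha⟩
    obtain ⟨n, hn⟩ := CommGroup.mem_primaryComponent_iff_orderOf.mp ha
    have hd : orderOf (QuotientGroup.mk a : A' ⧸ Subgroup.zpowers u) ∣ p ^ n := by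
      rw [← hn]
      exact orderOf_map_dvd (QuotientGroup.mk' _) a
    obtain ⟨j, _, hj⟩ := (Nat.dvd_prime_pow hpp).mp hd
    exact CommGroup.mem_primaryComponent_iff_orderOf.mpr ⟨j, hj⟩
  set ψ : ↥(CommGroup.primaryComponent A' p) →*
      ↥(CommGroup.primaryComponent (A' ⧸ Subgroup.zpowers u) p) :=
    (((QuotientGroup.mk' (Subgroup.zpowers u)).comp
      (CommGroup.primaryComponent A' p).subtype)).codRestrict _ hmem with hψ
  have hsurj : Function.Surjective ψ := by
    rintro ⟨β, hβ⟩
    obtain ⟨j, hj⟩ := CommGroup.mem_primaryComponent_iff_orderOf.mp hβ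
    obtain ⟨α, hα⟩ := QuotientGroup.mk_surjective β
    set d := orderOf α with hd_def
    have hd0 : d ≠ 0 := (orderOf_pos α).ne'
    set v := d.factorization p with hv_def
    set m := d / p ^ v with hm_def
    have hvm : p ^ v * m = d := Nat.ordProj_mul_ordCompl_eq_self d p
    have hnd : ¬ p ∣ m := Nat.not_dvd_ordCompl hpp hd0
    have hpcop : Nat.Coprime p m := (hpp.coprime_iff_not_dvd).mpr hnd
    have hone : 1 < p ^ (v + 1) := Nat.one_lt_pow (Nat.succ_ne_zero v) hpp.one_lt
    obtain ⟨m', -, hm'⟩ := Nat.exists_mul_mod_eq_one_of_coprime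
      ((hpcop.pow_left (v + 1)).symm) hone
    set N := m * m' with hN_def
    have hNmodeq : N ≡ 1 [MOD p ^ (v + 1)] := by
      show N % p ^ (v + 1) = 1 % p ^ (v + 1)
      rw [hm', Nat.mod_eq_of_lt hone]
    have hmem2 : α ^ N ∈ CommGroup.primaryComponent A' p := by
      have h1 : (α ^ N) ^ p ^ (v + 1) = 1 := by
        rw [← pow_mul]
        have harith : N * p ^ (v + 1) = d * (m' * p) := by rw [← hvm, pow_succ]; ring
        rw [harith, pow_mul, pow_orderOf_eq_one, one_pow]
      obtain ⟨j', _, hj'⟩ := (Nat.dvd_prime_pow hpp).mp (orderOf_dvd_of_pow_eq_one h1)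
      exact CommGroup.mem_primaryComponent_iff_orderOf.mpr ⟨j', hj'⟩
    refine ⟨⟨α ^ N, hmem2⟩, ?_⟩
    apply Subtype.ext
    show (QuotientGroup.mk (α ^ N) : A' ⧸ Subgroup.zpowers u) = β
    have h2 : (QuotientGroup.mk (α ^ N) : A' ⧸ Subgroup.zpowers u) = β ^ N := by
      rw [← hα]
      exact map_pow (QuotientGroup.mk' _) α N
    rw [h2]
    have h3 : orderOf β ∣ p ^ v := by
      have h4 : orderOf β ∣ d := by
        rw [← hα]
        exact orderOf_map_dvd (QuotientGroup.mk' _) α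
      rw [hj] at h4
      have h5 : p ^ j ∣ p ^ v := (hpcop.pow_left j).dvd_of_dvd_mul_right (hvm ▸ h4)
      rw [hj]
      exact h5
    have h6 : N ≡ 1 [MOD orderOf β] :=
      hNmodeq.of_dvd (h3.trans (pow_dvd_pow p (Nat.le_succ v)))
    calc β ^ N = β ^ 1 := pow_eq_pow_iff_modEq.mpr h6
    _ = β := pow_one β
  have hker : ψ.ker = (Subgroup.zpowers u).subgroupOf (CommGroup.primaryComponent A' p) := by
    ext a
    rw [MonoidHom.mem_ker, Subgroup.mem_subgroupOf]
    constructor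
    · intro h
      have h1 : (QuotientGroup.mk (a : A') : A' ⧸ Subgroup.zpowers u) = 1 :=
        congrArg Subtype.val h
      exact (QuotientGroup.eq_one_iff _).mp h1
    · intro h
      apply Subtype.ext
      show (QuotientGroup.mk (a : A') : A' ⧸ Subgroup.zpowers u) = 1
      exact (QuotientGroup.eq_one_iff _).mpr h
  exact ⟨(QuotientGroup.quotientMulEquivOfEq hker.symm).trans
    (QuotientGroup.quotientKerEquivOfSurjective ψ hsurj)⟩

end Stmt19

theorem stmt_19 (p : ℕ) [Fact p.Prime] (hp : Odd p)
    (G : Type) [Group G] [Fintype G]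
    (U : Type) [CommGroup U] [MulDistribMulAction G U]
    -- the Tate parameter: G-fixed, of infinite order
    (q : U) (hq : ∀ g : G, g • q = q) (hqord : ∀ n : ℕ, 0 < n → q ^ n ≠ 1)
    (qf : ↥(FixedPoints.subgroup G U)) (hqf : (qf : U) = q)
    -- the norm map ν : U → U^G, x ↦ ∏_g g • x
    (ν : U →* ↥(FixedPoints.subgroup G U))
    (hν : ∀ x : U, (ν x : U) = ∏ g : G, g • x)
    -- the induced norm on E(K) = U/⟨q⟩ with values in E(k) = U^G/⟨q⟩
    (νE : (U ⧸ Subgroup.zpowers q) →*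
      (↥(FixedPoints.subgroup G U) ⧸ Subgroup.zpowers qf))
    (hνE : ∀ x : U, νE ((QuotientGroup.mk' (Subgroup.zpowers q)) x) =
      (QuotientGroup.mk' (Subgroup.zpowers qf)) (ν x))
    -- `E(K)` has finite p-primary torsion
    (htors : Finite ↥(CommGroup.primaryComponent (U ⧸ Subgroup.zpowers q) p))
    -- local class field theory: `k^×/N(K^×)` is finite
    (hfin : Finite (↥(FixedPoints.subgroup G U) ⧸ ν.range)) :
    -- D = coker of the norm on p-adic completions ≅
    --   (p-primary part of U^G/ν(U)) ⧸ ⟨class of q⟩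
    Nonempty (
      ((↥(PComp p (↥(FixedPoints.subgroup G U) ⧸ Subgroup.zpowers qf))) ⧸
          (pCompMap p νE).range) ≃*
      (↥(CommGroup.primaryComponent (↥(FixedPoints.subgroup G U) ⧸ ν.range) p) ⧸
        ((Subgroup.zpowers ((QuotientGroup.mk' ν.range) qf)).subgroupOf
          (CommGroup.primaryComponent (↥(FixedPoints.subgroup G U) ⧸ ν.range) p)))) := by
  classical
  haveI := hfin
  set u : (↥(FixedPoints.subgroup G U) ⧸ ν.range) := (QuotientGroup.mk' ν.range) qf with hu
  have hlift : Subgroup.zpowers qf ≤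
      ((QuotientGroup.mk' (Subgroup.zpowers u)).comp (QuotientGroup.mk' ν.range)).ker := by
    intro x hx
    obtain ⟨k, hk⟩ := Subgroup.mem_zpowers_iff.mp hx
    rw [MonoidHom.mem_ker, ← hk]
    show QuotientGroup.mk ((QuotientGroup.mk' ν.range) (qf ^ k)) = 1
    rw [map_zpow]
    rw [QuotientGroup.eq_one_iff]
    exact Subgroup.zpow_mem _ (Subgroup.mem_zpowers u) k
  set π : (↥(FixedPoints.subgroup G U) ⧸ Subgroup.zpowers qf) →*
      ((↥(FixedPoints.subgroup G U) ⧸ ν.range) ⧸ Subgroup.zpowers u) :=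
    QuotientGroup.lift (Subgroup.zpowers qf)
      ((QuotientGroup.mk' (Subgroup.zpowers u)).comp (QuotientGroup.mk' ν.range))
      hlift with hπ
  have hπmk : ∀ c : ↥(FixedPoints.subgroup G U),
      π (QuotientGroup.mk c) = QuotientGroup.mk (QuotientGroup.mk c) :=
    fun c => QuotientGroup.lift_mk' _ _ c
  have hs : Function.Surjective π := by
    intro β
    induction β using QuotientGroup.induction_on with
    | H a =>
      induction a using QuotientGroup.induction_on with
      | H c => exact ⟨QuotientGroup.mk c, hπmk c⟩
  have hk : ∀ y, π y = 1 ↔ y ∈ νE.range := by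
    intro y
    induction y using QuotientGroup.induction_on with
    | H c =>
      constructor
      · intro h
        rw [hπmk c] at h
        have h2 : (QuotientGroup.mk c : _ ⧸ ν.range) ∈ Subgroup.zpowers u :=
          (QuotientGroup.eq_one_iff _).mp h
        obtain ⟨k, hk'⟩ := Subgroup.mem_zpowers_iff.mp h2
        have h3 : (QuotientGroup.mk (qf ^ k) : _ ⧸ ν.range) = QuotientGroup.mk c := by
          rw [← hk']
          exact map_zpow (QuotientGroup.mk' ν.range) qf k
        have h4 : (qf ^ k)⁻¹ * c ∈ ν.range := QuotientGroup.eq.mp h3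
        obtain ⟨x, hx⟩ := h4
        refine ⟨QuotientGroup.mk x, ?_⟩
        show νE ((QuotientGroup.mk' (Subgroup.zpowers q)) x) = QuotientGroup.mk c
        rw [hνE x]
        show (QuotientGroup.mk (ν x) : _ ⧸ Subgroup.zpowers qf) = QuotientGroup.mk c
        rw [hx, QuotientGroup.eq]
        have h6 : ((qf ^ k)⁻¹ * c)⁻¹ * c = qf ^ k := by
          simp [mul_inv_rev, mul_comm, mul_left_comm, mul_assoc]
        rw [h6]
        exact Subgroup.zpow_mem _ (Subgroup.mem_zpowers qf) k
      · intro h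
        obtain ⟨w, hw⟩ := h
        obtain ⟨x, hx⟩ := QuotientGroup.mk_surjective w
        have h1 : νE w = QuotientGroup.mk (ν x) := by
          rw [← hx]
          exact hνE x
        rw [← hw, h1, hπmk (ν x)]
        have h2 : (QuotientGroup.mk (ν x) : _ ⧸ ν.range) = 1 :=
          (QuotientGroup.eq_one_iff _).mpr ⟨x, rfl⟩
        rw [h2]
        simp
  have hfinB : Finite ((↥(FixedPoints.subgroup G U) ⧸ ν.range) ⧸ Subgroup.zpowers u) := inferInstance
  obtain ⟨e1⟩ := Stmt19.main (Bf := (↥(FixedPoints.subgroup G U) ⧸ ν.range) ⧸ Subgroup.zpowers u) p νE π hs hk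
  obtain ⟨e2⟩ := Stmt19.l1 p (↥(FixedPoints.subgroup G U) ⧸ ν.range) u
  exact ⟨e1.trans e2.symm⟩
end
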